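/- arXiv:1906.04387 — 9 statements merged into one kernel-verified Lean document; each statement's English description precedes it below -/
import Mathlib

section
/- Let E be a finite-dimensional real normed space, T₀ > 0, F₀ : E → E a C¹ vector field, and γ₀ : ℝ → E a T₀-periodic solution of x' = F₀(x), i.e. γ₀(t + T₀) = γ₀(t) and γ₀'(t) = F₀(γ₀(t)) for all t. Let Φ : ℝ → (E →L[ℝ] E) be the fundamental solution of the variational equation, i.e. Φ(0) = id and Φ'(t) = DF₀(γ₀(t)) ∘ Φ(t) for all t (where DF₀ denotes the Fréchet derivative of F₀), and assume hyperbolic stability in the form: every v ∈ E with Φ(T₀) v = v is a scalar multiple of F₀(γ₀(0)). Let c : ℝ → E be any function, and let a, b : ℝ → E be two T₀-periodic differentiable functions each satisfying x'(t) = DF₀(γ₀(t)) x(t) + c(t) for all t. Then there exists a constant φ ∈ ℝ such that b(t) − a(t) = φ • F₀(γ₀(t)) for all t ∈ ℝ. -/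
open scoped RealInnerProductSpace

open Set in
/-- Uniqueness for linear ODEs with continuous coefficients: two global solutions
agreeing at time `0` agree everywhere. -/
lemma lin_ODE_unique {E : Type*} [NormedAddCommGroup E] [NormedSpace ℝ E]
    (A : ℝ → E →L[ℝ] E) (hA : Continuous A) (f g : ℝ → E)
    (hf : ∀ t, HasDerivAt f (A t (f t)) t)
    (hg : ∀ t, HasDerivAt g (A t (g t)) t)
    (h0 : f 0 = g 0) : ∀ t, f t = g t := by
  intro t
  set R : ℝ := |t| + 1 with hR
  have hRpos : 0 < R := by positivity
  have hmem : t ∈ Icc (-R) R := by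
    constructor <;> [nlinarith [abs_nonneg t, neg_abs_le t]; nlinarith [le_abs_self t]]
  -- bound the norm of A on the compact interval
  obtain ⟨C, hC⟩ := (isCompact_Icc (a := -R) (b := R)).exists_bound_of_continuousOn
    (hA.continuousOn)
  set K : NNReal := (C ⊔ 0).toNNReal with hK
  -- clamp time into the interval
  set cl : ℝ → ℝ := fun s => max (-R) (min R s) with hcl
  have hclmem : ∀ s, cl s ∈ Icc (-R) R := by
    intro s
    refine ⟨le_max_left _ _, max_le (by linarith) (min_le_left _ _)⟩
  have hcl_eq : ∀ s ∈ Ioo (-R) R, cl s = s := by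
    intro s hs
    simp only [hcl]
    rw [min_eq_right hs.2.le, max_eq_right hs.1.le]
  set v : ℝ → E → E := fun s x => A (cl s) x with hv
  have hlip : ∀ s, LipschitzWith K (v s) := by
    intro s
    refine (A (cl s)).lipschitz.weaken ?_
    have h1 : ‖A (cl s)‖ ≤ C ⊔ 0 := le_sup_of_le_left (hC _ (hclmem s))
    have h2 : (‖A (cl s)‖₊ : ℝ).toNNReal = ‖A (cl s)‖₊ := Real.toNNReal_coe
    rw [hK, ← h2]
    exact Real.toNNReal_mono (by simpa using h1)
  have key : EqOn f g (Icc (-R) R) := by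
    refine ODE_solution_unique_of_mem_Icc (v := v) (s := fun _ => univ) (t₀ := 0)
      (fun s _ => (hlip s).lipschitzOnWith) ⟨by linarith, hRpos⟩
      (fun s _ => ((hf s).continuousAt).continuousWithinAt) ?_ (fun _ _ => trivial)
      (fun s _ => ((hg s).continuousAt).continuousWithinAt) ?_ (fun _ _ => trivial) h0
    · intro s hs
      have := hf s
      rwa [show v s (f s) = A s (f s) by rw [hv]; simp [hcl_eq s hs]]
    · intro s hs
      have := hg s
      rwa [show v s (g s) = A s (g s) by rw [hv]; simp [hcl_eq s hs]]
  exact key hmem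

/-- Lemma 2.1: any two T₀-periodic solutions of the iSRC equation differ by a constant
multiple of the vector field along the limit cycle. -/
theorem stmt0
    {E : Type*} [NormedAddCommGroup E] [NormedSpace ℝ E] [FiniteDimensional ℝ E]
    (T₀ : ℝ) (hT₀ : 0 < T₀)
    (F₀ : E → E) (hF₀ : ContDiff ℝ 1 F₀)
    (γ₀ : ℝ → E)
    (hγper : ∀ t, γ₀ (t + T₀) = γ₀ t)
    (hγode : ∀ t, HasDerivAt γ₀ (F₀ (γ₀ t)) t)
    (Φ : ℝ → E →L[ℝ] E)
    (hΦ0 : Φ 0 = ContinuousLinearMap.id ℝ E)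
    (hΦode : ∀ t, HasDerivAt Φ ((fderiv ℝ F₀ (γ₀ t)).comp (Φ t)) t)
    (hhyp : ∀ v : E, Φ T₀ v = v → ∃ c : ℝ, v = c • F₀ (γ₀ 0))
    (c : ℝ → E) (a b : ℝ → E)
    (haper : ∀ t, a (t + T₀) = a t) (hbper : ∀ t, b (t + T₀) = b t)
    (haode : ∀ t, HasDerivAt a (fderiv ℝ F₀ (γ₀ t) (a t) + c t) t)
    (hbode : ∀ t, HasDerivAt b (fderiv ℝ F₀ (γ₀ t) (b t) + c t) t) :
    ∃ φ : ℝ, ∀ t, b t - a t = φ • F₀ (γ₀ t) := by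
  set A : ℝ → E →L[ℝ] E := fun t => fderiv ℝ F₀ (γ₀ t) with hAdef
  have hγcont : Continuous γ₀ := Differentiable.continuous (fun t => (hγode t).differentiableAt)
  have hAcont : Continuous A := (hF₀.continuous_fderiv one_ne_zero).comp hγcont
  set y : ℝ → E := fun t => b t - a t with hydef
  have hy : ∀ t, HasDerivAt y (A t (y t)) t := by
    intro t
    have := (hbode t).sub (haode t)
    have heq : (fderiv ℝ F₀ (γ₀ t) (b t) + c t) - (fderiv ℝ F₀ (γ₀ t) (a t) + c t)
        = A t (y t) := by
      simp only [hAdef, hydef, map_sub]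
      abel
    rwa [heq] at this
  -- the function t ↦ Φ t (y 0) solves the same linear ODE
  set u : ℝ → E := fun s => Φ s (y 0) with hudef
  have hu : ∀ s, HasDerivAt u (A s (u s)) s := by
    intro s
    have h1 := (hΦode s).clm_apply (hasDerivAt_const s (y 0))
    simpa [hudef, hAdef] using h1
  have huy : ∀ s, u s = y s :=
    lin_ODE_unique A hAcont u y hu hy (by simp [hudef, hΦ0])
  have hyper : y T₀ = y 0 := by
    have := congrArg₂ (fun p q => p - q) (hbper 0) (haper 0)
    simpa [hydef, zero_add] using this
  have hfix : Φ T₀ (y 0) = y 0 := by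
    have := huy T₀
    rw [hudef] at this
    simp only at this
    rw [this, hyper]
  obtain ⟨φ, hφ⟩ := hhyp (y 0) hfix
  refine ⟨φ, ?_⟩
  -- the function t ↦ φ • F₀ (γ₀ t) also solves the homogeneous equation
  set g : ℝ → E := fun t => φ • F₀ (γ₀ t) with hgdef
  have hg : ∀ t, HasDerivAt g (A t (g t)) t := by
    intro t
    have h1 : HasDerivAt (fun s => F₀ (γ₀ s)) (fderiv ℝ F₀ (γ₀ t) (F₀ (γ₀ t))) t :=
      ((hF₀.differentiable one_ne_zero (γ₀ t)).hasFDerivAt).comp_hasDerivAt t (hγode t)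
    have h2 := h1.const_smul φ
    simpa [hgdef, hAdef, map_smul, Pi.smul_def] using h2
  have h0 : y 0 = g 0 := by simpa [hgdef] using hφ
  intro t
  have := lin_ODE_unique A hAcont y g hy hg h0 t
  simpa [hydef, hgdef] using this
end

section
/- Let E be a finite-dimensional real inner product space, n ∈ E a unit vector, and F : E → E a C² vector field. Define the sliding vector field G(x) := F(x) − ⟨n, F(x)⟩ n (the tangential projection of F along the unit normal n). Fix x₀ with ⟨n, x₀⟩ = 0 and ⟨n, F(x₀)⟩ < 0. Let t₁ > 0, let y : [0, t₁] → E satisfy y(0) = x₀ and y'(t) = G(y(t)) for all t ∈ [0, t₁], and for each ε > 0 let x_ε : [0, t₁] → E satisfy x_ε(0) = x₀ + ε n and x_ε'(t) = F(x_ε(t)) for all t ∈ [0, t₁]. Then there exist constants C > 0 and δ > 0 and a function τ : (0, δ) → (0, t₁] such that for every ε ∈ (0, δ): ⟨n, x_ε(τ(ε))⟩ = 0, τ(ε) ≤ C ε, and ‖x_ε(τ(ε)) − y(τ(ε))‖ ≤ C ε². -/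
open scoped RealInnerProductSpace
open Set Metric Filter Topology

open Set Metric Filter Topology

lemma stays_in_ball {E : Type*} [NormedAddCommGroup E] [NormedSpace ℝ E]
    (f f' : ℝ → E) (c : E) (T r r0 M : ℝ)
    (hderiv : ∀ t ∈ Set.Icc (0:ℝ) T, HasDerivAt f (f' t) t)
    (hbd : ∀ t ∈ Set.Icc (0:ℝ) T, ‖f t - c‖ ≤ r → ‖f' t‖ ≤ M)
    (h0 : ‖f 0 - c‖ ≤ r0)
    (hlt : r0 + M * T < r) (hM : 0 ≤ M) (hT : 0 ≤ T) :
    ∀ t ∈ Set.Icc (0:ℝ) T, ‖f t - c‖ ≤ r := by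
  intro t ht
  by_contra hcon
  push_neg at hcon
  set S : Set ℝ := {s | s ∈ Set.Icc (0:ℝ) T ∧ r < ‖f s - c‖} with hS
  have hSne : S.Nonempty := ⟨t, ht, hcon⟩
  have hSbd : BddBelow S := ⟨0, fun s hs => hs.1.1⟩
  set t₂ := sInf S with ht₂
  have ht₂cl : t₂ ∈ closure S := csInf_mem_closure hSne hSbd
  have hSsub : S ⊆ Set.Icc 0 T := fun s hs => hs.1
  have ht₂Icc : t₂ ∈ Set.Icc (0:ℝ) T := by
    have := closure_mono hSsub ht₂cl
    rwa [isClosed_Icc.closure_eq] at this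
  have hgc : ContinuousAt (fun s => ‖f s - c‖) t₂ :=
    (((hderiv t₂ ht₂Icc).continuousAt).sub continuousAt_const).norm
  have hr0r : r0 < r := by nlinarith
  -- r ≤ ‖f t₂ - c‖
  have h1 : r ≤ ‖f t₂ - c‖ := by
    haveI hne : (𝓝[S] t₂).NeBot := mem_closure_iff_nhdsWithin_neBot.mp ht₂cl
    refine ge_of_tendsto (hgc.continuousWithinAt (s := S)).tendsto ?_
    filter_upwards [eventually_mem_nhdsWithin] with s hs
    exact hs.2.le
  have ht₂pos : 0 < t₂ := by
    rcases lt_or_eq_of_le ht₂Icc.1 with h | h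
    · exact h
    · exfalso; rw [← h] at h1; linarith
  -- for s in [0, t₂), ‖f s - c‖ ≤ r
  have hsmall : ∀ s, 0 ≤ s → s < t₂ → ‖f s - c‖ ≤ r := by
    intro s h0s hst
    by_contra h'
    push_neg at h'
    exact absurd (csInf_le hSbd ⟨⟨h0s, hst.le.trans ht₂Icc.2⟩, h'⟩) (not_le.2 hst)
  have hmvt : ∀ s, 0 ≤ s → s < t₂ → ‖f s - c‖ ≤ r0 + M * s := by
    intro s h0s hst
    have hsT : s ≤ T := hst.le.trans ht₂Icc.2
    have key := norm_image_sub_le_of_norm_deriv_le_segment'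
      (f := f) (f' := f') (a := 0) (b := s) (C := M)
      (fun u hu => (hderiv u ⟨hu.1, hu.2.trans hsT⟩).hasDerivWithinAt)
      (fun u hu => hbd u ⟨hu.1, hu.2.le.trans hsT⟩
        (hsmall u hu.1 (lt_of_lt_of_le hu.2 hst.le)))
      s ⟨h0s, le_refl s⟩
    calc ‖f s - c‖ ≤ ‖f s - f 0‖ + ‖f 0 - c‖ := norm_sub_le_norm_sub_add_norm_sub _ _ _
    _ ≤ M * (s - 0) + r0 := add_le_add key h0
    _ = r0 + M * s := by ring
  -- pass to limit s → t₂⁻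
  have h2 : ‖f t₂ - c‖ ≤ r0 + M * t₂ := by
    haveI hne : (𝓝[<] t₂).NeBot := inferInstance
    have htend : Tendsto (fun s => ‖f s - c‖) (𝓝[<] t₂) (𝓝 ‖f t₂ - c‖) :=
      hgc.continuousWithinAt
    have htend2 : Tendsto (fun s => r0 + M * s) (𝓝[<] t₂) (𝓝 (r0 + M * t₂)) :=
      ((continuous_const.add (continuous_const.mul continuous_id)).tendsto t₂).mono_left
        nhdsWithin_le_nhds
    refine le_of_tendsto_of_tendsto htend htend2 ?_
    filter_upwards [Ioo_mem_nhdsLT_of_mem (show t₂ ∈ Set.Ioc (0:ℝ) t₂ from ⟨ht₂pos, le_refl _⟩)]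
      with s hs
    exact hmvt s hs.1.le hs.2
  have : M * t₂ ≤ M * T := mul_le_mul_of_nonneg_left ht₂Icc.2 hM
  linarith

set_option maxHeartbeats 2000000

/-- Key flow estimate of Theorem 3.1(c): a trajectory perturbed normally off the sliding
region returns to the boundary within time `O(ε)` at a point within `O(ε²)` of the
sliding trajectory. -/
theorem stmt2 {E : Type*} [NormedAddCommGroup E] [InnerProductSpace ℝ E]
    [FiniteDimensional ℝ E]
    (n : E) (hn : ‖n‖ = 1) (F : E → E) (hF : ContDiff ℝ 2 F)
    (G : E → E) (hG : ∀ x, G x = F x - ⟪n, F x⟫ • n)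
    (x₀ : E) (hx₀ : ⟪n, x₀⟫ = 0) (hFx₀ : ⟪n, F x₀⟫ < 0)
    (t₁ : ℝ) (ht₁ : 0 < t₁)
    (y : ℝ → E) (hy0 : y 0 = x₀)
    (hyode : ∀ t ∈ Set.Icc (0 : ℝ) t₁, HasDerivAt y (G (y t)) t)
    (x : ℝ → ℝ → E)
    (hx0 : ∀ ε > (0 : ℝ), x ε 0 = x₀ + ε • n)
    (hxode : ∀ ε > (0 : ℝ), ∀ t ∈ Set.Icc (0 : ℝ) t₁, HasDerivAt (x ε) (F (x ε t)) t) :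
    ∃ C > (0 : ℝ), ∃ δ > (0 : ℝ), ∃ τ : ℝ → ℝ,
      ∀ ε ∈ Set.Ioo (0 : ℝ) δ,
        τ ε ∈ Set.Ioc (0 : ℝ) t₁ ∧
        ⟪n, x ε (τ ε)⟫ = 0 ∧
        τ ε ≤ C * ε ∧
        ‖x ε (τ ε) - y (τ ε)‖ ≤ C * ε ^ 2 := by
  have hFc : Continuous F := hF.continuous
  have hnn : ⟪n, n⟫ = (1:ℝ) := by
    rw [real_inner_self_eq_norm_sq, hn]; norm_num
  set a : ℝ := -⟪n, F x₀⟫ with ha_def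
  have ha : 0 < a := by simp only [ha_def]; linarith
  have hGn : ∀ z, ⟪n, G z⟫ = 0 := by
    intro z; rw [hG, inner_sub_right, real_inner_smul_right, hnn]; ring
  -- radius r
  obtain ⟨r, hr, hFr⟩ : ∃ r > (0:ℝ), ∀ z ∈ Metric.closedBall x₀ r, ⟪n, F z⟫ ≤ -a/2 := by
    have hc : ContinuousAt (fun z => ⟪n, F z⟫) x₀ :=
      (continuous_const.inner hFc).continuousAt
    have hlt : ⟪n, F x₀⟫ < -a/2 := by simp only [ha_def]; linarith
    have hev : ∀ᶠ z in 𝓝 x₀, ⟪n, F z⟫ < -a/2 := hc.eventually_lt continuousAt_const hlt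
    obtain ⟨r', hr', hball⟩ := Metric.eventually_nhds_iff_ball.mp hev
    exact ⟨r'/2, by positivity, fun z hz =>
      (hball z (lt_of_le_of_lt (Metric.mem_closedBall.mp hz) (by linarith))).le⟩
  -- bound M on F
  obtain ⟨M₀, hM₀⟩ := (isCompact_closedBall x₀ r).exists_bound_of_continuousOn hFc.continuousOn
  set M : ℝ := max M₀ 1 with hM_def
  have hM1 : (1:ℝ) ≤ M := le_max_right _ _
  have hM : (0:ℝ) < M := lt_of_lt_of_le one_pos hM1
  have hMF : ∀ z ∈ Metric.closedBall x₀ r, ‖F z‖ ≤ M :=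
    fun z hz => (hM₀ z hz).trans (le_max_left _ _)
  have hMG : ∀ z ∈ Metric.closedBall x₀ r, ‖G z‖ ≤ 2*M := by
    intro z hz
    rw [hG]
    calc ‖F z - ⟪n, F z⟫ • n‖ ≤ ‖F z‖ + ‖⟪n, F z⟫ • n‖ := norm_sub_le _ _
    _ = ‖F z‖ + |⟪n, F z⟫| * ‖n‖ := by rw [norm_smul, Real.norm_eq_abs]
    _ ≤ ‖F z‖ + (‖n‖ * ‖F z‖) * ‖n‖ := by
        have := abs_real_inner_le_norm n (F z)
        nlinarith [norm_nonneg n]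
    _ = 2 * ‖F z‖ := by rw [hn]; ring
    _ ≤ 2 * M := by linarith [hMF z hz]
  -- Lipschitz constant L
  obtain ⟨L₀, hL₀⟩ := (isCompact_closedBall x₀ r).exists_bound_of_continuousOn
    (hF.continuous_fderiv (by norm_num)).continuousOn
  set L : ℝ := max L₀ 0 with hL_def
  have hL : (0:ℝ) ≤ L := le_max_right _ _
  have hLip : ∀ z ∈ Metric.closedBall x₀ r, ∀ w ∈ Metric.closedBall x₀ r,
      ‖F z - F w‖ ≤ L * ‖z - w‖ := by
    intro z hz w hw
    exact (convex_closedBall x₀ r).norm_image_sub_le_of_norm_fderiv_le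
      (fun u _ => (hF.differentiable (by norm_num)).differentiableAt)
      (fun u hu => (hL₀ u hu).trans (le_max_left _ _)) hw hz
  -- time horizon T
  set T : ℝ := min t₁ (r / (4*M)) with hT_def
  have hT : 0 < T := lt_min ht₁ (by positivity)
  have hTt₁ : T ≤ t₁ := min_le_left _ _
  have hMT : M * T ≤ r/4 := by
    have : T ≤ r / (4*M) := min_le_right _ _
    calc M * T ≤ M * (r / (4*M)) := by nlinarith
    _ = r/4 := by field_simp
  set δ : ℝ := min (r/8) (a*T/8) with hδ_def
  have hδ : 0 < δ := lt_min (by positivity) (by positivity)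
  set K : ℝ := 1 + 12*M/a with hK_def
  have hK : 0 < K := by positivity
  set C : ℝ := 4/a + 4*L*K/a + 1 with hC_def
  have hC : 0 < C := by positivity
  -- inner n (y t) = 0
  have hyn : ∀ t ∈ Set.Icc (0:ℝ) t₁, ⟪n, y t⟫ = 0 := by
    intro t ht
    have key := norm_image_sub_le_of_norm_deriv_le_segment'
      (f := fun s => ⟪n, y s⟫) (f' := fun s => ⟪n, G (y s)⟫) (a := 0) (b := t₁) (C := 0)
      (fun u hu => ((innerSL ℝ n).hasFDerivAt.comp_hasDerivAt u (hyode u hu)).hasDerivWithinAt)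
      (fun u _ => by simp [hGn])
      t ht
    simpa [hy0, hx₀] using key
  -- y stays in ball on [0,T]
  have hyball : ∀ t ∈ Set.Icc (0:ℝ) T, ‖y t - x₀‖ ≤ r := by
    refine stays_in_ball y (fun t => G (y t)) x₀ T r 0 (2*M)
      (fun t ht => hyode t ⟨ht.1, ht.2.trans hTt₁⟩)
      (fun t _ h => hMG _ (Metric.mem_closedBall.mpr (by rwa [dist_eq_norm])))
      (by simp [hy0]) ?_ (by positivity) hT.le
    nlinarith
  -- main per-ε construction
  have key : ∀ ε : ℝ, ∃ τ : ℝ, ε ∈ Set.Ioo (0:ℝ) δ →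
      (τ ∈ Set.Ioc (0:ℝ) t₁ ∧ ⟪n, x ε τ⟫ = 0 ∧ τ ≤ C*ε ∧ ‖x ε τ - y τ‖ ≤ C*ε^2) := by
    intro ε
    by_cases hε : ε ∈ Set.Ioo (0:ℝ) δ
    swap
    · exact ⟨t₁, fun h => absurd h hε⟩
    obtain ⟨hε0, hεδ⟩ := hε
    have hεr : ε ≤ r/8 := le_of_lt (lt_of_lt_of_le hεδ (min_le_left _ _))
    have hεa : ε ≤ a*T/8 := le_of_lt (lt_of_lt_of_le hεδ (min_le_right _ _))
    have hxode' : ∀ t ∈ Set.Icc (0:ℝ) T, HasDerivAt (x ε) (F (x ε t)) t :=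
      fun t ht => hxode ε hε0 t ⟨ht.1, ht.2.trans hTt₁⟩
    have hx0' : x ε 0 = x₀ + ε • n := hx0 ε hε0
    -- x stays in ball
    have hxball : ∀ t ∈ Set.Icc (0:ℝ) T, ‖x ε t - x₀‖ ≤ r := by
      refine stays_in_ball (x ε) (fun t => F (x ε t)) x₀ T r (r/8) M
        hxode'
        (fun t _ h => hMF _ (Metric.mem_closedBall.mpr (by rwa [dist_eq_norm])))
        ?_ (by nlinarith) hM.le hT.le
      rw [hx0']
      simp only [add_sub_cancel_left, norm_smul, Real.norm_eq_abs, hn, mul_one,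
        abs_of_pos hε0]
      linarith
    set b : ℝ := 4*ε/a with hb_def
    have hb0 : 0 < b := by positivity
    have hbT : b ≤ T := by
      rw [hb_def]; rw [div_le_iff₀ ha]; nlinarith
    -- φ
    have hφd : ∀ t ∈ Set.Icc (0:ℝ) T, HasDerivAt (fun s => ⟪n, x ε s⟫) ⟪n, F (x ε t)⟫ t :=
      fun t ht => (innerSL ℝ n).hasFDerivAt.comp_hasDerivAt t (hxode' t ht)
    have hφ0 : ⟪n, x ε 0⟫ = ε := by
      rw [hx0', inner_add_right, real_inner_smul_right, hx₀, hnn]; ring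
    -- φ b ≤ ε - a/2 * b  via antitonicity of ψ
    have hψb : ⟪n, x ε b⟫ ≤ ε - a/2 * b := by
      set ψ : ℝ → ℝ := fun s => ⟪n, x ε s⟫ + a/2 * s with hψ_def
      have hψd : ∀ t ∈ Set.Icc (0:ℝ) b, HasDerivAt ψ (⟪n, F (x ε t)⟫ + a/2) t := by
        intro t ht
        have h2 : HasDerivAt (fun s : ℝ => a/2 * s) (a/2) t := by
          simpa using (hasDerivAt_id t).const_mul (a/2)
        exact (hφd t ⟨ht.1, ht.2.trans hbT⟩).add h2
      have hanti : AntitoneOn ψ (Set.Icc 0 b) := by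
        refine antitoneOn_of_deriv_nonpos (convex_Icc 0 b)
          (fun t ht => (hψd t ht).continuousAt.continuousWithinAt)
          (fun t ht => (hψd t (interior_subset ht)).differentiableAt.differentiableWithinAt)
          (fun t ht => ?_)
        rw [interior_Icc] at ht
        rw [(hψd t ⟨ht.1.le, ht.2.le⟩).deriv]
        have hmem : x ε t ∈ Metric.closedBall x₀ r := Metric.mem_closedBall.mpr
          (by rw [dist_eq_norm]; exact hxball t ⟨ht.1.le, ht.2.le.trans hbT⟩)
        linarith [hFr _ hmem]
      have := hanti (Set.left_mem_Icc.mpr hb0.le) (Set.right_mem_Icc.mpr hb0.le) hb0.le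
      simp only [hψ_def, hφ0] at this
      linarith
    have hφb : ⟪n, x ε b⟫ < 0 := by
      have : a/2 * b = 2*ε := by rw [hb_def]; field_simp; ring
      rw [this] at hψb; linarith
    -- IVT
    have hφcont : ContinuousOn (fun s => ⟪n, x ε s⟫) (Set.Icc 0 b) :=
      fun t ht => (hφd t ⟨ht.1, ht.2.trans hbT⟩).continuousAt.continuousWithinAt
    obtain ⟨τ, hτmem, hτ0⟩ : ∃ τ ∈ Set.Icc (0:ℝ) b, ⟪n, x ε τ⟫ = 0 := by
      have h00 : (0:ℝ) ∈ Set.Icc ⟪n, x ε b⟫ ⟪n, x ε 0⟫ := by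
        rw [hφ0]; exact ⟨hφb.le, hε0.le⟩
      have := intermediate_value_Icc' hb0.le hφcont h00
      obtain ⟨τ, hτ1, hτ2⟩ := this
      exact ⟨τ, hτ1, hτ2⟩
    have hτpos : 0 < τ := by
      rcases lt_or_eq_of_le hτmem.1 with h | h
      · exact h
      · exfalso; rw [← h] at hτ0; rw [hφ0] at hτ0; linarith
    have hτT : τ ≤ T := hτmem.2.trans hbT
    have hτt₁ : τ ≤ t₁ := hτT.trans hTt₁
    refine ⟨τ, fun _ => ⟨⟨hτpos, hτt₁⟩, hτ0, ?_, ?_⟩⟩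
    · -- τ ≤ C ε
      have h1 : τ ≤ 4/a * ε := le_trans hτmem.2 (le_of_eq (by ring))
      have h2 : 4/a * ε ≤ C * ε := by
        have h3 : (0:ℝ) ≤ 4*L*K/a := by positivity
        have h4 : 4/a ≤ C := by rw [hC_def]; linarith
        nlinarith
      exact le_trans h1 h2
    · -- the ε² estimate
      set d : ℝ → E := fun t => x ε t - y t with hd_def
      have hdd : ∀ t ∈ Set.Icc (0:ℝ) T, HasDerivAt d (F (x ε t) - G (y t)) t :=
        fun t ht => (hxode' t ht).sub (hyode t ⟨ht.1, ht.2.trans hTt₁⟩)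
      have hd0 : ‖d 0‖ = ε := by
        simp only [hd_def, hx0', hy0]
        rw [add_sub_cancel_left, norm_smul, Real.norm_eq_abs, hn, abs_of_pos hε0, mul_one]
      have hdb : ∀ t ∈ Set.Icc (0:ℝ) τ, ‖d t‖ ≤ K * ε := by
        intro t ht
        have htT : t ≤ T := ht.2.trans hτT
        have key := norm_image_sub_le_of_norm_deriv_le_segment'
          (f := d) (f' := fun s => F (x ε s) - G (y s)) (a := 0) (b := t) (C := 3*M)
          (fun u hu => (hdd u ⟨hu.1, hu.2.trans htT⟩).hasDerivWithinAt)
          (fun u hu => by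
            have huT : u ∈ Set.Icc (0:ℝ) T := ⟨hu.1, hu.2.le.trans htT⟩
            have h1 : ‖F (x ε u)‖ ≤ M := hMF _ (Metric.mem_closedBall.mpr
              (by rw [dist_eq_norm]; exact hxball u huT))
            have h2 : ‖G (y u)‖ ≤ 2*M := hMG _ (Metric.mem_closedBall.mpr
              (by rw [dist_eq_norm]; exact hyball u huT))
            calc ‖F (x ε u) - G (y u)‖ ≤ ‖F (x ε u)‖ + ‖G (y u)‖ := norm_sub_le _ _
            _ ≤ 3*M := by linarith)
          t ⟨ht.1, le_refl t⟩
        have htb : t ≤ b := ht.2.trans hτmem.2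
        calc ‖d t‖ = ‖(d t - d 0) + d 0‖ := by rw [sub_add_cancel]
        _ ≤ ‖d t - d 0‖ + ‖d 0‖ := norm_add_le _ _
        _ ≤ 3*M * (t - 0) + ε := by rw [hd0]; linarith [key]
        _ ≤ 3*M * b + ε := by nlinarith
        _ = K * ε := by rw [hK_def, hb_def]; field_simp; ring
      -- projection P
      set P : E →L[ℝ] E := ContinuousLinearMap.id ℝ E - (innerSL ℝ n).smulRight n with hP_def
      have hP : ∀ z : E, P z = z - ⟪n, z⟫ • n := by
        intro z; simp [hP_def]
      have hPn : P n = 0 := by rw [hP, hnn]; simp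
      have hPnorm : ∀ z : E, ‖P z‖ ≤ ‖z‖ := by
        intro z
        have hsq : ‖P z‖^2 ≤ ‖z‖^2 := by
          rw [hP, norm_sub_sq_real, real_inner_smul_right, norm_smul, Real.norm_eq_abs, hn,
            mul_one, real_inner_comm z n]
          nlinarith [sq_abs (⟪z, n⟫ : ℝ), sq_nonneg (⟪z, n⟫ : ℝ), sq_abs (⟪n, z⟫ : ℝ), sq_nonneg (⟪n, z⟫ : ℝ)]
        nlinarith [norm_nonneg (P z), norm_nonneg z]
      have hPG : ∀ u z : E, P (F u - G z) = P (F u - F z) := by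
        intro u z
        rw [hG, map_sub, map_sub, map_sub, map_smul, hPn, smul_zero, sub_zero]
      -- derivative of w = P ∘ d
      have hwd : ∀ t ∈ Set.Icc (0:ℝ) τ, HasDerivAt (fun s => P (d s))
          (P (F (x ε t) - G (y t))) t :=
        fun t ht => P.hasFDerivAt.comp_hasDerivAt t (hdd t ⟨ht.1, ht.2.trans hτT⟩)
      have hwbound := norm_image_sub_le_of_norm_deriv_le_segment'
        (f := fun s => P (d s)) (f' := fun s => P (F (x ε s) - G (y s))) (a := 0) (b := τ)
        (C := L * (K * ε))
        (fun u hu => (hwd u hu).hasDerivWithinAt)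
        (fun u hu => by
          have huIcc : u ∈ Set.Icc (0:ℝ) τ := ⟨hu.1, hu.2.le⟩
          have huT : u ∈ Set.Icc (0:ℝ) T := ⟨hu.1, hu.2.le.trans hτT⟩
          show ‖P (F (x ε u) - G (y u))‖ ≤ L * (K * ε)
          rw [hPG]
          calc ‖P (F (x ε u) - F (y u))‖ ≤ ‖F (x ε u) - F (y u)‖ := hPnorm _
          _ ≤ L * ‖x ε u - y u‖ := hLip _ (Metric.mem_closedBall.mpr
              (by rw [dist_eq_norm]; exact hxball u huT)) _ (Metric.mem_closedBall.mpr
              (by rw [dist_eq_norm]; exact hyball u huT))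
          _ ≤ L * (K * ε) := mul_le_mul_of_nonneg_left (hdb u huIcc) hL)
        τ ⟨hτpos.le, le_refl τ⟩
      have hw0 : P (d 0) = 0 := by
        have : d 0 = ε • n := by simp [hd_def, hx0', hy0]
        rw [this, map_smul, hPn, smul_zero]
      have hdτ : d τ = P (d τ) := by
        have hinner : ⟪n, d τ⟫ = 0 := by
          simp only [hd_def, inner_sub_right, hτ0, hyn τ ⟨hτpos.le, hτt₁⟩, sub_zero]
        rw [hP, hinner, zero_smul, sub_zero]
      have hfinal : ‖d τ‖ ≤ L * (K * ε) * τ := by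
        rw [hdτ]
        calc ‖P (d τ)‖ = ‖P (d τ) - P (d 0)‖ := by rw [hw0, sub_zero]
        _ ≤ L * (K * ε) * (τ - 0) := hwbound
        _ = L * (K * ε) * τ := by ring
      have hτb' : τ ≤ 4*ε/a := hτmem.2
      calc ‖x ε τ - y τ‖ = ‖d τ‖ := rfl
      _ ≤ L * (K * ε) * τ := hfinal
      _ ≤ L * (K * ε) * (4*ε/a) := by
          apply mul_le_mul_of_nonneg_left hτb'
          positivity
      _ = (4*L*K/a) * ε^2 := by field_simp
      _ ≤ C * ε^2 := by
          have h3 : (0:ℝ) ≤ 4/a := by positivity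
          have h4 : 4*L*K/a ≤ C := by rw [hC_def]; linarith
          nlinarith [sq_nonneg ε]
  choose τ hτ using key
  exact ⟨C, hC, δ, hδ, τ, fun ε hε => hτ ε hε⟩
end

section
/- Let E be a finite-dimensional real inner product space, n ∈ E a unit vector, and F : E → E a C¹ vector field. Fix x₀ with ⟨n, x₀⟩ = 0 and ⟨n, F(x₀)⟩ < 0. Let t₁ > 0 and for each ε > 0 let x_ε : [0, t₁] → E satisfy x_ε(0) = x₀ + ε n and x_ε'(t) = F(x_ε(t)) for all t ∈ [0, t₁]. Then there exist δ > 0 and a function τ : (0, δ) → (0, t₁] such that for every ε ∈ (0, δ): ⟨n, x_ε(t)⟩ > 0 for all 0 ≤ t < τ(ε), ⟨n, x_ε(τ(ε))⟩ = 0, and τ(ε)/ε → −1/⟨n, F(x₀)⟩ as ε → 0⁺. -/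
open scoped RealInnerProductSpace


private lemma stmt3_div_le {eps d t : ℝ} (heps : 0 < eps) (hd : 0 < d)
    (h : eps / d ≤ t) : 1 / d ≤ t / eps := by
  rw [div_le_div_iff₀ hd heps]
  rw [div_le_iff₀ hd] at h
  linarith

private lemma stmt3_le_div {eps d t : ℝ} (heps : 0 < eps) (hd : 0 < d)
    (h : t ≤ eps / d) : t / eps ≤ 1 / d := by
  rw [div_le_div_iff₀ heps hd]
  rw [le_div_iff₀ hd] at h
  linarith

private lemma stmt3_arith {c η η' : ℝ} (hc : c < 0) (hη : 0 < η) (hη1 : η ≤ -c / 2)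
    (hη2 : 4 * η ≤ η' * c ^ 2) (hη' : 0 < η') :
    -η' < 1 / (η - c) + 1 / c ∧ 1 / (-(c + η)) + 1 / c < η' := by
  have hηc : (0:ℝ) < η - c := by linarith
  have hcη : (0:ℝ) < -(c + η) := by linarith
  have hcpos : (0:ℝ) < -c := by linarith
  have h1 : η - c ≠ 0 := hηc.ne'
  have h2 : c ≠ 0 := hc.ne
  have h3 : -(c + η) ≠ 0 := hcη.ne'
  constructor
  · have e : 1 / (η - c) + 1 / c = -(η / ((η - c) * (-c))) := by
      field_simp; ring
    rw [e]
    have k1 : (-c) * (-c) ≤ (η - c) * (-c) :=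
      mul_le_mul_of_nonneg_right (by linarith) hcpos.le
    have k2 : η' * ((-c) * (-c)) ≤ η' * ((η - c) * (-c)) :=
      mul_le_mul_of_nonneg_left k1 hη'.le
    have hb : η / ((η - c) * (-c)) < η' := by
      rw [div_lt_iff₀ (by positivity)]
      nlinarith [k2]
    linarith
  · have e : 1 / (-(c + η)) + 1 / c = η / ((-(c + η)) * (-c)) := by
      rw [div_add_div _ _ h3 h2,
        div_eq_div_iff (mul_ne_zero h3 h2) (mul_ne_zero h3 (neg_ne_zero.mpr h2))]
      ring
    rw [e, div_lt_iff₀ (by positivity)]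
    have k1 : (-c / 2) * (-c) ≤ (-(c + η)) * (-c) :=
      mul_le_mul_of_nonneg_right (by linarith) hcpos.le
    have k2 : η' * ((-c / 2) * (-c)) ≤ η' * ((-(c + η)) * (-c)) :=
      mul_le_mul_of_nonneg_left k1 hη'.le
    nlinarith [k2]

set_option maxHeartbeats 1000000 in
/-- Hitting-time asymptotic `τ(ε) = −ε/⟨n, F(x₀)⟩ + o(ε)` for the trajectory started at
height `ε` above the sliding region of a hard boundary. -/
theorem stmt3 {E : Type*} [NormedAddCommGroup E] [InnerProductSpace ℝ E]
    [FiniteDimensional ℝ E]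
    (n : E) (hn : ‖n‖ = 1) (F : E → E) (hF : ContDiff ℝ 1 F)
    (x₀ : E) (hx₀ : ⟪n, x₀⟫ = 0) (hFx₀ : ⟪n, F x₀⟫ < 0)
    (t₁ : ℝ) (ht₁ : 0 < t₁)
    (x : ℝ → ℝ → E)
    (hx0 : ∀ ε > (0 : ℝ), x ε 0 = x₀ + ε • n)
    (hxode : ∀ ε > (0 : ℝ), ∀ t ∈ Set.Icc (0 : ℝ) t₁, HasDerivAt (x ε) (F (x ε t)) t) :
    ∃ δ > (0 : ℝ), ∃ τ : ℝ → ℝ,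
      (∀ ε ∈ Set.Ioo (0 : ℝ) δ,
        τ ε ∈ Set.Ioc (0 : ℝ) t₁ ∧
        (∀ t, 0 ≤ t → t < τ ε → 0 < ⟪n, x ε t⟫) ∧
        ⟪n, x ε (τ ε)⟫ = 0) ∧
      Filter.Tendsto (fun ε => τ ε / ε) (nhdsWithin 0 (Set.Ioi 0))
        (nhds (-1 / ⟪n, F x₀⟫)) := by
  classical
  set c : ℝ := ⟪n, F x₀⟫ with hc_def
  have hc : c < 0 := hFx₀
  -- continuity of `y ↦ ⟪n, F y⟫`
  have hφcont : Continuous fun y : E => (⟪n, F y⟫ : ℝ) :=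
    continuous_const.inner hF.continuous
  have hr : ∀ η : ℝ, 0 < η → ∃ r > (0:ℝ), ∀ y : E, ‖y - x₀‖ ≤ r → |⟪n, F y⟫ - c| ≤ η := by
    intro η hη
    obtain ⟨d, hd, hball⟩ := Metric.continuousAt_iff.mp (hφcont.continuousAt (x := x₀)) η hη
    refine ⟨d / 2, by positivity, fun y hy => ?_⟩
    have : dist y x₀ < d := by
      rw [dist_eq_norm]; linarith
    have := hball this
    rw [Real.dist_eq] at this
    exact (le_of_lt this)
  obtain ⟨r₀, hr₀pos, hr₀⟩ := hr (-c / 2) (by linarith)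
  obtain ⟨M₀, hM₀⟩ :=
    (isCompact_closedBall x₀ r₀).exists_bound_of_continuousOn hF.continuous.continuousOn
  set M : ℝ := max M₀ 1 with hM_def
  have hM1 : (1 : ℝ) ≤ M := le_max_right _ _
  have hMpos : (0 : ℝ) < M := lt_of_lt_of_le one_pos hM1
  have hM : ∀ y : E, ‖y - x₀‖ ≤ r₀ → ‖F y‖ ≤ M := by
    intro y hy
    refine le_trans (hM₀ y ?_) (le_max_left _ _)
    simpa [Metric.mem_closedBall, dist_eq_norm] using hy
  -- the first hitting time
  set τ : ℝ → ℝ := fun ε => sInf (Set.Icc 0 t₁ ∩ {t | (⟪n, x ε t⟫ : ℝ) = 0}) with hτ_def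
  -- key estimates, for every small `η`
  have key : ∀ η : ℝ, 0 < η → η ≤ -c / 2 → ∃ δ > (0:ℝ), ∀ ε : ℝ, 0 < ε → ε < δ →
      (0 < τ ε ∧ τ ε ≤ t₁) ∧ (∀ t, 0 ≤ t → t < τ ε → 0 < (⟪n, x ε t⟫ : ℝ)) ∧
      (⟪n, x ε (τ ε)⟫ : ℝ) = 0 ∧ ε / (η - c) ≤ τ ε ∧ τ ε ≤ ε / (-(c + η)) := by
    intro η hη hηle
    obtain ⟨r₁, hr₁pos, hr₁⟩ := hr η hη
    set r : ℝ := min r₁ r₀ with hr_def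
    have hrpos : 0 < r := lt_min hr₁pos hr₀pos
    set b : ℝ := -(c + η) with hb_def
    have hb : 0 < b := by rw [hb_def]; linarith
    have hbne : b ≠ 0 := ne_of_gt hb
    refine ⟨min (r / (2 * (1 + M / b))) (t₁ * b),
      lt_min (by positivity) (by positivity), ?_⟩
    intro ε hε hεδ
    have hε1 : ε * (1 + M / b) < r / 2 := by
      have h := lt_of_lt_of_le hεδ (min_le_left _ _)
      have hpos : (0:ℝ) < 2 * (1 + M / b) := by positivity
      rw [lt_div_iff₀ hpos] at h
      nlinarith
    have hε2 : ε < t₁ * b := lt_of_lt_of_le hεδ (min_le_right _ _)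
    set T : ℝ := ε / b with hT_def
    have hTpos : 0 < T := div_pos hε hb
    have hTt₁ : T ≤ t₁ := le_of_lt ((div_lt_iff₀ hb).mpr hε2)
    have hIccsub : Set.Icc (0:ℝ) T ⊆ Set.Icc 0 t₁ := Set.Icc_subset_Icc le_rfl hTt₁
    have hode : ∀ t ∈ Set.Icc (0:ℝ) t₁, HasDerivAt (x ε) (F (x ε t)) t := hxode ε hε
    have hx0' : x ε 0 = x₀ + ε • n := hx0 ε hε
    have hcont : ContinuousOn (x ε) (Set.Icc 0 t₁) :=
      fun t ht => (hode t ht).continuousAt.continuousWithinAt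
    have hstart : ‖x ε 0 - x₀‖ = ε := by
      rw [hx0', add_sub_cancel_left, norm_smul, hn, Real.norm_eq_abs, abs_of_pos hε, mul_one]
    have hMb : (0:ℝ) < M / b := by positivity
    have hεr : ε < r / 2 := by nlinarith
    have hεMT : ε + M * T = ε * (1 + M / b) := by
      rw [hT_def]; field_simp
    -- mean value theorem step
    have hstep : ∀ s ∈ Set.Icc (0:ℝ) T, (∀ σ ∈ Set.Icc (0:ℝ) s, ‖x ε σ - x₀‖ ≤ r) →
        ‖x ε s - x₀‖ ≤ ε + M * s := by
      intro s hs hballs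
      have hsub : Set.Icc (0:ℝ) s ⊆ Set.Icc 0 t₁ :=
        Set.Icc_subset_Icc le_rfl (le_trans hs.2 hTt₁)
      have hmvt := Convex.norm_image_sub_le_of_norm_hasDerivWithin_le
        (f := x ε) (f' := fun σ => F (x ε σ)) (s := Set.Icc 0 s) (C := M)
        (fun σ hσ => (hode σ (hsub hσ)).hasDerivWithinAt)
        (fun σ hσ => hM _ (le_trans (hballs σ hσ) (min_le_right _ _)))
        (convex_Icc 0 s) (Set.left_mem_Icc.mpr hs.1) (Set.right_mem_Icc.mpr hs.1)
      have htri : ‖x ε s - x₀‖ ≤ ‖x ε s - x ε 0‖ + ‖x ε 0 - x₀‖ :=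
        norm_sub_le_norm_sub_add_norm_sub _ _ _
      have hnorm : ‖s - 0‖ = s := by
        rw [sub_zero, Real.norm_eq_abs, abs_of_nonneg hs.1]
      rw [hnorm] at hmvt
      rw [hstart] at htri
      linarith
    -- the trajectory stays in the ball of radius `r` up to time `T`
    have hball : ∀ t ∈ Set.Icc (0:ℝ) T, ‖x ε t - x₀‖ < r := by
      by_contra hcon
      push_neg at hcon
      obtain ⟨t₂, ht₂, ht₂r⟩ := hcon
      have hψcont : ContinuousOn (fun t => ‖x ε t - x₀‖) (Set.Icc 0 T) :=
        (((hcont.mono hIccsub).sub continuousOn_const).norm)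
      have hBclosed : IsClosed (Set.Icc 0 T ∩ (fun t => ‖x ε t - x₀‖) ⁻¹' Set.Ici r) :=
        hψcont.preimage_isClosed_of_isClosed isClosed_Icc isClosed_Ici
      have hBne : (Set.Icc 0 T ∩ (fun t => ‖x ε t - x₀‖) ⁻¹' Set.Ici r).Nonempty :=
        ⟨t₂, ht₂, ht₂r⟩
      have hBbdd : BddBelow (Set.Icc 0 T ∩ (fun t => ‖x ε t - x₀‖) ⁻¹' Set.Ici r) :=
        BddBelow.mono Set.inter_subset_left bddBelow_Icc
      set u : ℝ := sInf (Set.Icc 0 T ∩ (fun t => ‖x ε t - x₀‖) ⁻¹' Set.Ici r) with hu_def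
      have huB : u ∈ Set.Icc 0 T ∩ (fun t => ‖x ε t - x₀‖) ⁻¹' Set.Ici r :=
        hBclosed.csInf_mem hBne hBbdd
      have hur : r ≤ ‖x ε u - x₀‖ := huB.2
      have hupos : 0 < u := by
        rcases eq_or_lt_of_le huB.1.1 with h | h
        · exfalso
          rw [← h, hstart] at hur
          linarith
        · exact h
      have hlt : ∀ s, 0 ≤ s → s < u → ‖x ε s - x₀‖ < r := by
        intro s hs0 hsu
        by_contra hge
        push_neg at hge
        have : u ≤ s := csInf_le hBbdd ⟨⟨hs0, le_trans hsu.le huB.1.2⟩, hge⟩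
        linarith
      have hbound : ∀ s, 0 ≤ s → s < u → ‖x ε s - x₀‖ ≤ ε + M * s := by
        intro s hs0 hsu
        exact hstep s ⟨hs0, le_trans hsu.le huB.1.2⟩
          (fun σ hσ => (hlt σ hσ.1 (lt_of_le_of_lt hσ.2 hsu)).le)
      have htend1 : Filter.Tendsto (fun s => ‖x ε s - x₀‖) (nhdsWithin u (Set.Iio u))
          (nhds ‖x ε u - x₀‖) :=
        (((hode u (hIccsub huB.1)).continuousAt.sub continuousAt_const).norm).tendsto.mono_left
          nhdsWithin_le_nhds
      have htend2 : Filter.Tendsto (fun s => ε + M * s) (nhdsWithin u (Set.Iio u))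
          (nhds (ε + M * u)) :=
        ((continuous_const.add (continuous_const.mul continuous_id)).tendsto u).mono_left
          nhdsWithin_le_nhds
      have hev : ∀ᶠ s in nhdsWithin u (Set.Iio u), ‖x ε s - x₀‖ ≤ ε + M * s := by
        filter_upwards [Ioo_mem_nhdsLT_of_mem (Set.right_mem_Ioc.mpr hupos)] with s hs
        exact hbound s hs.1.le hs.2
      have hlim : ‖x ε u - x₀‖ ≤ ε + M * u := le_of_tendsto_of_tendsto htend1 htend2 hev
      have hMu : M * u ≤ M * T := mul_le_mul_of_nonneg_left huB.1.2 hMpos.le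
      linarith
    -- derivative of `g t = ⟪n, x ε t⟫`
    have hg : ∀ t ∈ Set.Icc (0:ℝ) t₁,
        HasDerivAt (fun s => (⟪n, x ε s⟫ : ℝ)) (⟪n, F (x ε t)⟫ : ℝ) t := by
      intro t ht
      have := (innerSL ℝ n).hasFDerivAt.comp_hasDerivAt t (hode t ht)
      simpa [Function.comp_def, innerSL_apply_apply] using this
    have hgcont : ContinuousOn (fun s => (⟪n, x ε s⟫ : ℝ)) (Set.Icc 0 t₁) :=
      fun t ht => ((hg t ht).continuousAt).continuousWithinAt
    have hg0 : (⟪n, x ε 0⟫ : ℝ) = ε := by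
      rw [hx0']
      simp [inner_add_right, real_inner_smul_right, hx₀,
        real_inner_self_eq_norm_mul_norm, hn]
    have hφbound : ∀ t ∈ Set.Icc (0:ℝ) T, |(⟪n, F (x ε t)⟫ : ℝ) - c| ≤ η := by
      intro t ht
      exact hr₁ _ (le_trans (hball t ht).le (min_le_left _ _))
    -- upper bound for g
    have hupper : ∀ t ∈ Set.Icc (0:ℝ) T, (⟪n, x ε t⟫ : ℝ) ≤ ε + (c + η) * t := by
      have hmono : MonotoneOn (fun t => (c + η) * t - (⟪n, x ε t⟫ : ℝ)) (Set.Icc 0 T) := by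
        apply monotoneOn_of_deriv_nonneg (convex_Icc 0 T)
        · exact (continuousOn_const.mul continuousOn_id).sub (hgcont.mono hIccsub)
        · intro t ht
          rw [interior_Icc] at ht
          have hd : HasDerivAt (fun t => (c + η) * t - (⟪n, x ε t⟫ : ℝ))
              ((c + η) * 1 - (⟪n, F (x ε t)⟫ : ℝ)) t :=
            (((hasDerivAt_id t).const_mul (c + η)).sub
              (hg t (hIccsub (Set.mem_Icc_of_Ioo ht))))
          exact hd.differentiableAt.differentiableWithinAt
        · intro t ht
          rw [interior_Icc] at ht
          have hd : HasDerivAt (fun t => (c + η) * t - (⟪n, x ε t⟫ : ℝ))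
              ((c + η) * 1 - (⟪n, F (x ε t)⟫ : ℝ)) t :=
            (((hasDerivAt_id t).const_mul (c + η)).sub
              (hg t (hIccsub (Set.mem_Icc_of_Ioo ht))))
          rw [hd.deriv]
          have h2 := (abs_le.mp (hφbound t (Set.mem_Icc_of_Ioo ht))).2
          simp only [mul_one]
          linarith
      intro t ht
      have := hmono (Set.left_mem_Icc.mpr hTpos.le) ht ht.1
      simp only [mul_zero, zero_sub] at this
      rw [hg0] at this
      linarith
    -- lower bound for g
    have hlower : ∀ t ∈ Set.Icc (0:ℝ) T, ε + (c - η) * t ≤ (⟪n, x ε t⟫ : ℝ) := by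
      have hmono : MonotoneOn (fun t => (⟪n, x ε t⟫ : ℝ) - (c - η) * t) (Set.Icc 0 T) := by
        apply monotoneOn_of_deriv_nonneg (convex_Icc 0 T)
        · exact (hgcont.mono hIccsub).sub (continuousOn_const.mul continuousOn_id)
        · intro t ht
          rw [interior_Icc] at ht
          have hd : HasDerivAt (fun t => (⟪n, x ε t⟫ : ℝ) - (c - η) * t)
              ((⟪n, F (x ε t)⟫ : ℝ) - (c - η) * 1) t :=
            ((hg t (hIccsub (Set.mem_Icc_of_Ioo ht))).sub
              ((hasDerivAt_id t).const_mul (c - η)))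
          exact hd.differentiableAt.differentiableWithinAt
        · intro t ht
          rw [interior_Icc] at ht
          have hd : HasDerivAt (fun t => (⟪n, x ε t⟫ : ℝ) - (c - η) * t)
              ((⟪n, F (x ε t)⟫ : ℝ) - (c - η) * 1) t :=
            ((hg t (hIccsub (Set.mem_Icc_of_Ioo ht))).sub
              ((hasDerivAt_id t).const_mul (c - η)))
          rw [hd.deriv]
          have h2 := (abs_le.mp (hφbound t (Set.mem_Icc_of_Ioo ht))).1
          simp only [mul_one]
          linarith
      intro t ht
      have := hmono (Set.left_mem_Icc.mpr hTpos.le) ht ht.1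
      simp only [mul_zero, sub_zero] at this
      rw [hg0] at this
      linarith
    -- g reaches 0 by time T
    have hgT : (⟪n, x ε T⟫ : ℝ) ≤ 0 := by
      have h1 := hupper T (Set.right_mem_Icc.mpr hTpos.le)
      have hcb : c + η = -b := by rw [hb_def]; ring
      have h3 : b * (ε / b) = ε := by field_simp
      have h2 : (c + η) * T = -ε := by
        rw [hcb, hT_def]
        linear_combination -h3
      linarith
    have hivt := intermediate_value_Icc' hTpos.le (hgcont.mono hIccsub)
    have h0mem : (0:ℝ) ∈ Set.Icc (⟪n, x ε T⟫ : ℝ) (⟪n, x ε 0⟫ : ℝ) :=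
      ⟨hgT, by rw [hg0]; exact hε.le⟩
    obtain ⟨t₂, ht₂mem, ht₂0⟩ := hivt h0mem
    -- the zero set
    set Z : Set ℝ := Set.Icc 0 t₁ ∩ {t | (⟪n, x ε t⟫ : ℝ) = 0} with hZ_def
    have hτeq : τ ε = sInf Z := by simp only [hτ_def, hZ_def]
    have hZclosed : IsClosed Z := by
      have : Z = Set.Icc 0 t₁ ∩ (fun t => (⟪n, x ε t⟫ : ℝ)) ⁻¹' {0} := by
        ext t; simp [hZ_def]
      rw [this]
      exact hgcont.preimage_isClosed_of_isClosed isClosed_Icc isClosed_singleton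
    have hZbdd : BddBelow Z := BddBelow.mono Set.inter_subset_left bddBelow_Icc
    have ht₂Z : t₂ ∈ Z := ⟨hIccsub ht₂mem, ht₂0⟩
    have hτmem : τ ε ∈ Z := by rw [hτeq]; exact hZclosed.csInf_mem ⟨t₂, ht₂Z⟩ hZbdd
    have hτt₂ : τ ε ≤ t₂ := by rw [hτeq]; exact csInf_le hZbdd ht₂Z
    have hτT : τ ε ≤ T := le_trans hτt₂ ht₂mem.2
    have hτ0 : 0 ≤ τ ε := hτmem.1.1
    have hgτ : (⟪n, x ε (τ ε)⟫ : ℝ) = 0 := hτmem.2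
    have hτpos : 0 < τ ε := by
      rcases eq_or_lt_of_le hτ0 with h | h
      · exfalso
        rw [← h, hg0] at hgτ
        linarith
      · exact h
    have hbefore : ∀ t, 0 ≤ t → t < τ ε → 0 < (⟪n, x ε t⟫ : ℝ) := by
      intro t ht0 htτ
      by_contra hle
      push_neg at hle
      have hsub2 : Set.Icc (0:ℝ) t ⊆ Set.Icc 0 t₁ :=
        Set.Icc_subset_Icc le_rfl (le_trans htτ.le hτmem.1.2)
      obtain ⟨s, hsmem, hs0⟩ := intermediate_value_Icc' ht0 (hgcont.mono hsub2)
        ⟨hle, by rw [hg0]; exact hε.le⟩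
      have hsZ : s ∈ Z := ⟨hsub2 hsmem, hs0⟩
      have : τ ε ≤ s := by rw [hτeq]; exact csInf_le hZbdd hsZ
      linarith [hsmem.2]
    have hτlow : ε / (η - c) ≤ τ ε := by
      have h1 := hlower (τ ε) ⟨hτ0, hτT⟩
      rw [hgτ] at h1
      rw [div_le_iff₀ (by linarith : (0:ℝ) < η - c)]
      nlinarith
    exact ⟨⟨hτpos, hτmem.1.2⟩, hbefore, hgτ, hτlow, hτT⟩
  -- conclusion
  obtain ⟨δ₀, hδ₀pos, hkey₀⟩ := key (-c / 2) (by linarith) le_rfl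
  refine ⟨δ₀, hδ₀pos, τ, ?_, ?_⟩
  · intro ε hε
    obtain ⟨⟨h1, h2⟩, h3, h4, _⟩ := hkey₀ ε hε.1 hε.2
    exact ⟨⟨h1, h2⟩, h3, h4⟩
  · rw [Metric.tendsto_nhdsWithin_nhds]
    intro η' hη'
    set η : ℝ := min (-c / 2) (η' * c ^ 2 / 4) with hη_def
    have hc2 : (0:ℝ) < c ^ 2 := pow_two_pos_of_ne_zero hc.ne
    have hηpos : 0 < η := lt_min (by linarith) (div_pos (mul_pos hη' hc2) (by norm_num))
    have hη1 : η ≤ -c / 2 := min_le_left _ _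
    have hη2 : 4 * η ≤ η' * c ^ 2 := by
      have := min_le_right (-c / 2) (η' * c ^ 2 / 4)
      rw [← hη_def] at this
      linarith
    obtain ⟨δ', hδ'pos, hkey⟩ := key η hηpos hη1
    refine ⟨δ', hδ'pos, ?_⟩
    intro ε hεIoi hεdist
    have hε : 0 < ε := hεIoi
    have hεδ : ε < δ' := by
      rw [Real.dist_eq, sub_zero, abs_of_pos hε] at hεdist
      exact hεdist
    obtain ⟨_, _, _, hlow, hup⟩ := hkey ε hε hεδ
    rw [Real.dist_eq]
    have hη_c : (0:ℝ) < η - c := by linarith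
    have hcη : (0:ℝ) < -(c + η) := by linarith
    have hl : 1 / (η - c) ≤ τ ε / ε := stmt3_div_le hε hη_c hlow
    have hu : τ ε / ε ≤ 1 / (-(c + η)) := stmt3_le_div hε hcη hup
    obtain ⟨haux2, haux1⟩ := stmt3_arith hc hηpos hη1 hη2 hη'
    have hneg : -1 / c = -(1 / c) := by ring
    rw [abs_lt, hneg]
    constructor
    · linarith
    · linarith
end

section
/- Let E be a finite-dimensional real normed space. Let F : ℝ × E → E be C¹ (jointly in the parameter ε and the state x) and let u : ℝ × ℝ → E be C² (jointly in (ε, t)) with ∂u/∂t(ε, t) = F(ε, u(ε, t)) for all (ε, t). Let ν : ℝ → ℝ be C¹ with ν(0) = 1, and set ν₁ := −ν'(0). Define γ₀(t) := u(0, t) and γ₁(t) := (d/dε)|_{ε=0} u(ε, t/ν(ε)). Then γ₁ is differentiable and for every t, γ₁'(t) = D_x F(0, γ₀(t)) γ₁(t) + ν₁ • F(0, γ₀(t)) + ∂F/∂ε(0, γ₀(t)), where D_x F denotes the Fréchet derivative of F with respect to the state variable. -/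
/-- Derivation of equation (2.16): the infinitesimal shape response curve
γ₁(t) = (d/dε)|₀ u(ε, t/ν(ε)) satisfies the inhomogeneous variational equation
γ₁' = D_x F(0, γ₀(t)) γ₁ + ν₁ F(0, γ₀(t)) + ∂F/∂ε(0, γ₀(t)), where ν₁ = −ν'(0). -/
theorem stmt9 {E : Type*} [NormedAddCommGroup E] [NormedSpace ℝ E]
    [FiniteDimensional ℝ E]
    (F : ℝ → E → E) (hF : ContDiff ℝ 1 (Function.uncurry F))
    (u : ℝ → ℝ → E) (hu : ContDiff ℝ 2 (Function.uncurry u))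
    (hode : ∀ ε t, HasDerivAt (u ε) (F ε (u ε t)) t)
    (ν : ℝ → ℝ) (hν : ContDiff ℝ 1 ν) (hν0 : ν 0 = 1)
    (ν₁ : ℝ) (hν₁ : ν₁ = -deriv ν 0)
    (γ₀ γ₁ : ℝ → E)
    (hγ₀ : ∀ t, γ₀ t = u 0 t)
    (hγ₁ : ∀ t, γ₁ t = deriv (fun ε => u ε (t / ν ε)) 0) :
    ∀ t, HasDerivAt γ₁
      (fderiv ℝ (F 0) (γ₀ t) (γ₁ t) + ν₁ • F 0 (γ₀ t)
        + deriv (fun ε => F ε (γ₀ t)) 0) t := by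
  intro t
  set U := Function.uncurry u with hU
  have hUd : Differentiable ℝ U := hu.differentiable (by norm_num)
  have hA : ContDiff ℝ 1 (fderiv ℝ U) := hu.fderiv_right (by norm_num)
  set A : ℝ × ℝ → (ℝ × ℝ) →L[ℝ] E := fderiv ℝ U with hAdef
  have hUf : ∀ p, HasFDerivAt U (A p) p := fun p => (hUd p).hasFDerivAt
  -- abbreviations for partial derivatives of U
  -- ∂₂ U (ε,s) = F ε (u ε s)
  have hA01 : ∀ ε s, A (ε, s) ((0 : ℝ), (1 : ℝ)) = F ε (u ε s) := by
    intro ε s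
    have h1 : HasDerivAt (fun s => U (ε, s)) (A (ε, s) ((0 : ℝ), (1 : ℝ))) s := by
      have := (hUf (ε, s)).comp_hasDerivAt s
        ((hasDerivAt_const s ε).prodMk (hasDerivAt_id s))
      simpa [Function.comp_def] using this
    exact h1.unique (hode ε s)
  -- Step A: γ₁ s = A (0,s) (1,0) + (s * ν₁) • F 0 (γ₀ s)
  have hνd : HasDerivAt ν (deriv ν 0) 0 := (hν.differentiable one_ne_zero 0).hasDerivAt
  have stepA : ∀ s : ℝ,
      γ₁ s = A (0, s) ((1 : ℝ), (0 : ℝ)) + (s * ν₁) • F 0 (γ₀ s) := by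
    intro s
    have hdiv : HasDerivAt (fun ε => s / ν ε) (s * ν₁) 0 := by
      have := (hasDerivAt_const (0 : ℝ) s).div hνd (by rw [hν0]; norm_num)
      refine this.congr_deriv ?_
      rw [hν0, hν₁]; ring
    have hcurve : HasDerivAt (fun ε => (ε, s / ν ε)) ((1 : ℝ), s * ν₁) 0 :=
      (hasDerivAt_id 0).prodMk hdiv
    have hUft : HasFDerivAt U (A ((0 : ℝ), s)) ((fun ε => (ε, s / ν ε)) 0) := by
      simpa [hν0] using hUf ((0 : ℝ), s)
    have hγ1At : HasDerivAt (fun ε => u ε (s / ν ε))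
        (A ((0 : ℝ), s) ((1 : ℝ), s * ν₁)) 0 := by
      have := hUft.comp_hasDerivAt 0 hcurve
      simpa [Function.comp_def, hU] using this
    have hval : γ₁ s = A ((0 : ℝ), s) ((1 : ℝ), s * ν₁) := by
      rw [hγ₁ s]; exact hγ1At.deriv
    have hdecomp : ((1 : ℝ), s * ν₁)
        = ((1 : ℝ), (0 : ℝ)) + (s * ν₁) • ((0 : ℝ), (1 : ℝ)) := by
      simp [Prod.ext_iff]
    rw [hval, hdecomp, map_add, map_smul, hA01 0 s, hγ₀ s]
  -- second derivative of U at (0, t)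
  set B : (ℝ × ℝ) →L[ℝ] (ℝ × ℝ) →L[ℝ] E := fderiv ℝ A (0, t) with hBdef
  have hB : HasFDerivAt A B (0, t) := (hA.differentiable one_ne_zero (0, t)).hasFDerivAt
  have hsymm : B ((0 : ℝ), (1 : ℝ)) ((1 : ℝ), (0 : ℝ))
      = B ((1 : ℝ), (0 : ℝ)) ((0 : ℝ), (1 : ℝ)) :=
    second_derivative_symmetric hUf hB _ _
  -- derivative of s ↦ A (0,s) (1,0) at t
  have hAcomp : HasDerivAt (fun s => A (0, s)) (B ((0 : ℝ), (1 : ℝ))) t := by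
    have := hB.comp_hasDerivAt t ((hasDerivAt_const t (0 : ℝ)).prodMk (hasDerivAt_id t))
    simpa [Function.comp_def] using this
  have hw : HasDerivAt (fun s => A (0, s) ((1 : ℝ), (0 : ℝ)))
      (B ((0 : ℝ), (1 : ℝ)) ((1 : ℝ), (0 : ℝ))) t := by
    simpa using hAcomp.clm_apply (hasDerivAt_const t ((1 : ℝ), (0 : ℝ)))
  -- compute B (1,0) (0,1) via the ODE
  set DF : (ℝ × E) →L[ℝ] E := fderiv ℝ (Function.uncurry F) (0, γ₀ t) with hDFdef
  have hFd : HasFDerivAt (Function.uncurry F) DF (0, γ₀ t) :=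
    (hF.differentiable one_ne_zero (0, γ₀ t)).hasFDerivAt
  have hAcomp3 : HasDerivAt (fun ε => A (ε, t)) (B ((1 : ℝ), (0 : ℝ))) 0 := by
    have := hB.comp_hasDerivAt 0 ((hasDerivAt_id (0:ℝ)).prodMk (hasDerivAt_const 0 t))
    simpa [Function.comp_def] using this
  have hh1 : HasDerivAt (fun ε => A (ε, t) ((0 : ℝ), (1 : ℝ)))
      (B ((1 : ℝ), (0 : ℝ)) ((0 : ℝ), (1 : ℝ))) 0 := by
    simpa using hAcomp3.clm_apply (hasDerivAt_const 0 ((0 : ℝ), (1 : ℝ)))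
  have heq : (fun ε => A (ε, t) ((0 : ℝ), (1 : ℝ))) = fun ε => F ε (u ε t) :=
    funext fun ε => hA01 ε t
  rw [heq] at hh1
  have hve : HasDerivAt (fun ε => u ε t) (A ((0 : ℝ), t) ((1 : ℝ), (0 : ℝ))) 0 := by
    have := (hUf ((0 : ℝ), t)).comp_hasDerivAt 0
      ((hasDerivAt_id (0:ℝ)).prodMk (hasDerivAt_const 0 t))
    simpa [Function.comp_def, hU] using this
  have hFdt : HasFDerivAt (Function.uncurry F) DF ((fun ε => (ε, u ε t)) 0) := by
    simpa [hγ₀ t] using hFd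
  have hh3 : HasDerivAt (fun ε => F ε (u ε t))
      (DF ((1 : ℝ), A ((0 : ℝ), t) ((1 : ℝ), (0 : ℝ)))) 0 := by
    have := hFdt.comp_hasDerivAt 0 ((hasDerivAt_id (0:ℝ)).prodMk hve)
    simpa [Function.comp_def] using this
  have hkey : B ((1 : ℝ), (0 : ℝ)) ((0 : ℝ), (1 : ℝ))
      = DF ((1 : ℝ), A ((0 : ℝ), t) ((1 : ℝ), (0 : ℝ))) := hh1.unique hh3
  -- the spatial derivative of F 0 at γ₀ t
  set L : E →L[ℝ] E := DF.comp (ContinuousLinearMap.inr ℝ ℝ E) with hLdef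
  have hF0 : HasFDerivAt (F 0) L (γ₀ t) := by
    have := hFd.comp (γ₀ t) (ContinuousLinearMap.inr ℝ ℝ E).hasFDerivAt
    simpa [Function.comp_def] using this
  have hfdF0 : fderiv ℝ (F 0) (γ₀ t) = L := hF0.fderiv
  -- the ε-partial of F at (0, γ₀ t)
  have hFeps : HasDerivAt (fun ε => F ε (γ₀ t)) (DF ((1 : ℝ), (0 : E))) 0 := by
    have hFdt' : HasFDerivAt (Function.uncurry F) DF ((fun ε => (ε, γ₀ t)) 0) := hFd
    have := hFdt'.comp_hasDerivAt 0 ((hasDerivAt_id (0:ℝ)).prodMk (hasDerivAt_const 0 (γ₀ t)))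
    simpa [Function.comp_def] using this
  have hfdFeps : deriv (fun ε => F ε (γ₀ t)) 0 = DF ((1 : ℝ), (0 : E)) := hFeps.deriv
  -- derivative of γ₀ and of s ↦ F 0 (γ₀ s)
  have hγ0eq : γ₀ = u 0 := funext hγ₀
  have hγ0' : HasDerivAt γ₀ (F 0 (γ₀ t)) t := by
    rw [hγ0eq]; exact hode 0 t
  have hFc : HasDerivAt (fun s => F 0 (γ₀ s)) (L (F 0 (γ₀ t))) t := by
    have hF0s : ∀ y : E, HasFDerivAt (F 0)
        ((fderiv ℝ (Function.uncurry F) (0, y)).comp (ContinuousLinearMap.inr ℝ ℝ E)) y := by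
      intro y
      have h1 : HasFDerivAt (Function.uncurry F) (fderiv ℝ (Function.uncurry F) (0, y)) (0, y) :=
        (hF.differentiable one_ne_zero (0, y)).hasFDerivAt
      have := h1.comp y (ContinuousLinearMap.inr ℝ ℝ E).hasFDerivAt
      simpa [Function.comp_def] using this
    exact hF0.comp_hasDerivAt t hγ0'
  -- product term
  have hprod : HasDerivAt (fun s => (s * ν₁) • F 0 (γ₀ s))
      ((t * ν₁) • L (F 0 (γ₀ t)) + ν₁ • F 0 (γ₀ t)) t := by
    have hc : HasDerivAt (fun s : ℝ => s * ν₁) ν₁ t := by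
      simpa using (hasDerivAt_id t).mul_const ν₁
    exact hc.smul hFc
  -- assemble
  have hγ1eq : γ₁ = fun s => A (0, s) ((1 : ℝ), (0 : ℝ)) + (s * ν₁) • F 0 (γ₀ s) :=
    funext stepA
  have htotal : HasDerivAt γ₁
      (B ((0 : ℝ), (1 : ℝ)) ((1 : ℝ), (0 : ℝ))
        + ((t * ν₁) • L (F 0 (γ₀ t)) + ν₁ • F 0 (γ₀ t))) t := by
    rw [hγ1eq]; exact hw.add hprod
  convert htotal using 1
  rw [hfdF0, hfdFeps, hsymm, hkey, stepA t]
  have hdec : ((1 : ℝ), A ((0 : ℝ), t) ((1 : ℝ), (0 : ℝ)))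
      = ((1 : ℝ), (0 : E)) + ((0 : ℝ), A ((0 : ℝ), t) ((1 : ℝ), (0 : ℝ))) := by
    simp
  rw [hdec, map_add]
  have hL0 : ∀ x : E, DF ((0 : ℝ), x) = L x := fun x => rfl
  rw [map_add, map_smul, ← hL0 (A ((0 : ℝ), t) ((1 : ℝ), (0 : ℝ)))]
  rw [← hL0 (F 0 (γ₀ t))]
  abel
end

section
/- Let E be a finite-dimensional real inner product space, let 𝒯 : E → ℝ be C², and let F : E → E be C¹. Assume that ⟨F(x), ∇𝒯(x)⟩ = −1 for all x ∈ E, where ∇𝒯 denotes the gradient of 𝒯. Let γ : ℝ → E satisfy γ'(t) = F(γ(t)) for all t, and define η(t) := ∇𝒯(γ(t)). Then η is differentiable and satisfies the adjoint equation η'(t) = −(DF(γ(t)))* η(t) for all t, where DF(γ(t)) is the Fréchet derivative of F at γ(t) and * denotes the Hilbert-space adjoint. -/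
open scoped RealInnerProductSpace

/-- Equation (2.25): the local timing response curve η(t) = ∇𝒯(γ(t)) satisfies the
adjoint equation η' = −(DF(γ(t)))* η. -/
theorem stmt10 {E : Type*} [NormedAddCommGroup E] [InnerProductSpace ℝ E]
    [FiniteDimensional ℝ E]
    (𝒯 : E → ℝ) (h𝒯 : ContDiff ℝ 2 𝒯)
    (F : E → E) (hF : ContDiff ℝ 1 F)
    (hunit : ∀ x : E, ⟪F x, gradient 𝒯 x⟫ = -1)
    (γ : ℝ → E) (hγ : ∀ t, HasDerivAt γ (F (γ t)) t)
    (η : ℝ → E) (hη : ∀ t, η t = gradient 𝒯 (γ t)) :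
    ∀ t, HasDerivAt η (-(ContinuousLinearMap.adjoint (fderiv ℝ F (γ t))) (η t)) t := by
  intro t
  set x := γ t with hx
  set L : (E →L[ℝ] ℝ) →L[ℝ] E :=
    ((InnerProductSpace.toDual ℝ E).symm : StrongDual ℝ E ≃ₗᵢ[ℝ] E).toContinuousLinearEquiv.toContinuousLinearMap with hL
  have hLapp : ∀ (φ : E →L[ℝ] ℝ) (v : E), ⟪L φ, v⟫ = φ v := by
    intro φ v
    simp [hL, InnerProductSpace.toDual_symm_apply]
  have hf' : ContDiff ℝ 1 (fderiv ℝ 𝒯) := h𝒯.fderiv_right (by norm_num)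
  -- differentiability of gradient
  have hGdiff : ∀ y : E, HasFDerivAt (gradient 𝒯)
      (L.comp (fderiv ℝ (fderiv ℝ 𝒯) y)) y := by
    intro y
    have h1 : HasFDerivAt (fderiv ℝ 𝒯) (fderiv ℝ (fderiv ℝ 𝒯) y) y :=
      (hf'.differentiable (by norm_num) y).hasFDerivAt
    exact L.hasFDerivAt.comp y h1
  -- key pointwise identity
  have key : L.comp (fderiv ℝ (fderiv ℝ 𝒯) x) (F x)
      = -(ContinuousLinearMap.adjoint (fderiv ℝ F x)) (gradient 𝒯 x) := by
    have hsymm : ∀ v w : E, fderiv ℝ (fderiv ℝ 𝒯) x v w = fderiv ℝ (fderiv ℝ 𝒯) x w v :=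
      (h𝒯.contDiffAt.isSymmSndFDerivAt (by norm_num)).eq
    -- derivative of constant inner product is zero
    have hconst : HasFDerivAt (fun y => ⟪F y, gradient 𝒯 y⟫) (0 : E →L[ℝ] ℝ) x := by
      have : (fun y => ⟪F y, gradient 𝒯 y⟫) = fun _ => (-1 : ℝ) := funext hunit
      rw [this]; exact hasFDerivAt_const _ _
    have hprod := ((hF.differentiable (by norm_num) x).hasFDerivAt).inner ℝ (hGdiff x)
    have hzero := hconst.unique hprod
    have hz : ∀ v : E, ⟪fderiv ℝ F x v, gradient 𝒯 x⟫ + ⟪F x, L (fderiv ℝ (fderiv ℝ 𝒯) x v)⟫ = 0 := by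
      intro v
      have := congrFun (congrArg (fun f : E →L[ℝ] ℝ => (f : E → ℝ)) hzero) v
      simp only [ContinuousLinearMap.zero_apply, ContinuousLinearMap.comp_apply,
        ContinuousLinearMap.prod_apply, fderivInnerCLM_apply] at this
      linarith
    apply ext_inner_right ℝ
    intro v
    have h1 : ⟪L.comp (fderiv ℝ (fderiv ℝ 𝒯) x) (F x), v⟫
        = fderiv ℝ (fderiv ℝ 𝒯) x (F x) v := by
      simp [hLapp]
    have h2 : ⟪F x, L (fderiv ℝ (fderiv ℝ 𝒯) x v)⟫ = fderiv ℝ (fderiv ℝ 𝒯) x v (F x) := by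
      rw [real_inner_comm]; exact hLapp _ _
    rw [h1, hsymm]
    have := hz v
    rw [h2] at this
    have h3 : fderiv ℝ (fderiv ℝ 𝒯) x v (F x) = -⟪fderiv ℝ F x v, gradient 𝒯 x⟫ := by
      linarith
    rw [h3, inner_neg_left, ContinuousLinearMap.adjoint_inner_left, real_inner_comm]
  have hηfun : η = fun s => gradient 𝒯 (γ s) := funext hη
  have := (hGdiff x).comp_hasDerivAt t (hγ t)
  rw [key] at this
  rw [hηfun]; exact this
end

section
/- Let E be a finite-dimensional real inner product space, n ∈ E a unit vector, and x_out ∈ E. Let 𝒯 : E → ℝ be differentiable at x_out and vanish identically on the hyperplane {x ∈ E : ⟨n, x − x_out⟩ = 0}. Let F : E → E with ⟨n, F(x_out)⟩ ≠ 0 and ⟨F(x_out), ∇𝒯(x_out)⟩ = −1, where ∇𝒯 denotes the gradient. Then ∇𝒯(x_out) = (−1/⟨n, F(x_out)⟩) • n. -/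
open scoped RealInnerProductSpace

/-- Boundary condition (2.26) for the local timing response curve: if 𝒯 vanishes on the
exit hyperplane with unit normal n and F · ∇𝒯 = −1 at the exit point, then
∇𝒯(x_out) = −n/(nᵀ F(x_out)). -/
theorem stmt11 {E : Type*} [NormedAddCommGroup E] [InnerProductSpace ℝ E]
    [FiniteDimensional ℝ E]
    (n x_out : E) (hn : ‖n‖ = 1)
    (𝒯 : E → ℝ) (hdiff : DifferentiableAt ℝ 𝒯 x_out)
    (hzero : ∀ x : E, ⟪n, x - x_out⟫ = 0 → 𝒯 x = 0)
    (F : E → E) (hF : ⟪n, F x_out⟫ ≠ 0)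
    (hnorm : ⟪F x_out, gradient 𝒯 x_out⟫ = -1) :
    gradient 𝒯 x_out = (-1 / ⟪n, F x_out⟫) • n := by
  set g := gradient 𝒯 x_out with hg
  -- directional derivatives orthogonal to n vanish
  have key : ∀ v : E, ⟪n, v⟫ = 0 → ⟪g, v⟫ = 0 := by
    intro v hv
    have hφ : HasDerivAt (fun t : ℝ => x_out + t • v) v 0 := by
      simpa using ((hasDerivAt_id (0:ℝ)).smul_const v).const_add x_out
    have hcomp : HasDerivAt (fun t : ℝ => 𝒯 (x_out + t • v)) ⟪g, v⟫ 0 := by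
      have hfd : HasFDerivAt 𝒯 (InnerProductSpace.toDual ℝ E g) (x_out + (0:ℝ) • v) := by
        simpa [hg, gradient] using hdiff.hasGradientAt.hasFDerivAt
      have := hfd.comp_hasDerivAt 0 hφ
      simp only [InnerProductSpace.toDual_apply_apply] at this; exact this
    have hzero' : (fun t : ℝ => 𝒯 (x_out + t • v)) = fun _ => 0 := by
      funext t
      exact hzero _ (by simp [inner_smul_right, hv])
    rw [hzero'] at hcomp
    have := hcomp.deriv
    simpa using this.symm
  -- g is parallel to n
  have hpar : g = ⟪n, g⟫ • n := by
    have h0 : ⟪n, g - ⟪n, g⟫ • n⟫ = 0 := by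
      have : ⟪n, n⟫ = (1:ℝ) := by
        rw [real_inner_self_eq_norm_sq, hn]; norm_num
      simp [inner_sub_right, inner_smul_right, this, hn]
    have h1 : ⟪g, g - ⟪n, g⟫ • n⟫ = 0 := key _ h0
    have h2 : ⟪g - ⟪n, g⟫ • n, g - ⟪n, g⟫ • n⟫ = 0 := by
      rw [inner_sub_left, h1, inner_smul_left]
      simp only [RCLike.star_def, conj_trivial]
      rw [h0]; ring
    have h3 := inner_self_eq_zero.mp h2
    have := sub_eq_zero.mp h3
    exact this
  -- compute the coefficient
  have hc : ⟪n, g⟫ = -1 / ⟪n, F x_out⟫ := by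
    have : ⟪F x_out, ⟪n, g⟫ • n⟫ = -1 := by rw [← hpar]; exact hnorm
    rw [inner_smul_right] at this
    rw [real_inner_comm n (F x_out)] at this
    field_simp
    linarith
  rw [hpar, hc]
end

section
/- Let E be a finite-dimensional real inner product space. Let 𝒯 : ℝ × E → ℝ be C² jointly in (ε, x) and F : ℝ × E → E be C¹ jointly, and assume ⟨F(ε, x), ∇_x 𝒯(ε, x)⟩ = −1 for all ε and x, where ∇_x denotes the gradient in the state variable. Let γ : ℝ → E satisfy γ'(t) = F(0, γ(t)) for all t, fix t_in < t_out, and assume 𝒯(ε, γ(t_out)) = 0 for all ε. Let x_in : ℝ → E be differentiable at 0 with x_in(0) = γ(t_in). Then the function ε ↦ 𝒯(ε, x_in(ε)) is differentiable at ε = 0 with derivative ⟨∇_x 𝒯(0, γ(t_in)), x_in'(0)⟩ + ∫_{t_in}^{t_out} ⟨∂F/∂ε(0, γ(t)), ∇_x 𝒯(0, γ(t))⟩ dt. -/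
open scoped RealInnerProductSpace

section Aux

variable {E : Type*} [NormedAddCommGroup E] [InnerProductSpace ℝ E] [FiniteDimensional ℝ E]

/-- inclusion `x ↦ (0, x)` as a CLM -/
noncomputable def stmt12_inr : E →L[ℝ] ℝ × E :=
  (0 : E →L[ℝ] ℝ).prod (ContinuousLinearMap.id ℝ E)

omit [FiniteDimensional ℝ E] in
lemma stmt12_inr_apply (v : E) : (stmt12_inr (E := E)) v = (0, v) := rfl

lemma stmt12_grad (𝒯 : ℝ → E → ℝ) (h𝒯 : ContDiff ℝ 2 (Function.uncurry 𝒯))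
    (ε : ℝ) (x : E) (v : E) :
    ⟪gradient (𝒯 ε) x, v⟫ = fderiv ℝ (Function.uncurry 𝒯) (ε, x) (0, v) := by
  have hGdiff : Differentiable ℝ (Function.uncurry 𝒯) := h𝒯.differentiable two_ne_zero
  have hcomp : HasFDerivAt (𝒯 ε)
      ((fderiv ℝ (Function.uncurry 𝒯) (ε, x)).comp (stmt12_inr (E := E))) x := by
    have h1 : HasFDerivAt (fun y : E => ((ε : ℝ), y)) (stmt12_inr (E := E)) x :=
      (hasFDerivAt_const ε x).prodMk (hasFDerivAt_id x)
    exact ((hGdiff (ε, x)).hasFDerivAt).comp x h1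
  rw [hcomp.hasGradientAt.gradient, InnerProductSpace.toDual_symm_apply]
  rfl

end Aux

/-- Equation (2.24): the linear shift in transit time through a region is
T₁ = η(x_in) · ∂x_in/∂ε|₀ + ∫ η · ∂F_ε/∂ε|₀ dt, where η = ∇_x 𝒯(0, ·) is the
local timing response curve and T_ε = 𝒯(ε, x_in(ε)) the perturbed transit time. -/
theorem stmt12 {E : Type*} [NormedAddCommGroup E] [InnerProductSpace ℝ E]
    [FiniteDimensional ℝ E]
    (𝒯 : ℝ → E → ℝ) (h𝒯 : ContDiff ℝ 2 (Function.uncurry 𝒯))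
    (F : ℝ → E → E) (hF : ContDiff ℝ 1 (Function.uncurry F))
    (hunit : ∀ (ε : ℝ) (x : E), ⟪F ε x, gradient (𝒯 ε) x⟫ = -1)
    (γ : ℝ → E) (hγ : ∀ t, HasDerivAt γ (F 0 (γ t)) t)
    (t_in t_out : ℝ) (hlt : t_in < t_out)
    (hexit : ∀ ε : ℝ, 𝒯 ε (γ t_out) = 0)
    (x_in : ℝ → E) (hx_in : DifferentiableAt ℝ x_in 0)
    (hx_in0 : x_in 0 = γ t_in) :
    HasDerivAt (fun ε => 𝒯 ε (x_in ε))
      (⟪gradient (𝒯 0) (γ t_in), deriv x_in 0⟫ +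
        ∫ t in t_in..t_out, ⟪deriv (fun ε => F ε (γ t)) 0, gradient (𝒯 0) (γ t)⟫) 0 := by
  set G := Function.uncurry 𝒯 with hGdef
  have hGdiff : Differentiable ℝ G := h𝒯.differentiable two_ne_zero
  set D := fderiv ℝ G with hDdef
  have hDC1 : ContDiff ℝ 1 D := h𝒯.fderiv_right (le_refl 2)
  have hDdiff : Differentiable ℝ D := hDC1.differentiable one_ne_zero
  have hFdiff : Differentiable ℝ (Function.uncurry F) := hF.differentiable one_ne_zero
  -- the ε-derivative of F at fixed point x
  set Fε : E → E := fun x => fderiv ℝ (Function.uncurry F) (0, x) (1, 0) with hFεdef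
  have hFε : ∀ x : E, HasDerivAt (fun ε => F ε x) (Fε x) 0 := by
    intro x
    have h1 : HasDerivAt (fun ε : ℝ => (ε, x)) ((1 : ℝ), (0 : E)) 0 :=
      (hasDerivAt_id 0).prodMk (hasDerivAt_const 0 x)
    exact ((hFdiff (0, x)).hasFDerivAt).comp_hasDerivAt 0 h1
  -- ε-derivative of 𝒯 at fixed point y, and curve derivative helpers
  have hεT : ∀ (ε₀ : ℝ) (y : E), HasDerivAt (fun ε => 𝒯 ε y) (D (ε₀, y) (1, 0)) ε₀ := by
    intro ε₀ y
    have h1 : HasDerivAt (fun ε : ℝ => (ε, y)) ((1 : ℝ), (0 : E)) ε₀ :=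
      (hasDerivAt_id ε₀).prodMk (hasDerivAt_const ε₀ y)
    exact ((hGdiff (ε₀, y)).hasFDerivAt).comp_hasDerivAt ε₀ h1
  -- φ t = ∂ε 𝒯(0, γ t)
  set φ : ℝ → ℝ := fun t => D (0, γ t) (1, 0) with hφdef
  -- derivative of ε ↦ D (ε, x)
  have hDε : ∀ x : E, HasDerivAt (fun ε => D (ε, x)) (fderiv ℝ D (0, x) (1, 0)) 0 := by
    intro x
    have h1 : HasDerivAt (fun ε : ℝ => (ε, x)) ((1 : ℝ), (0 : E)) 0 :=
      (hasDerivAt_id 0).prodMk (hasDerivAt_const 0 x)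
    exact HasFDerivAt.comp_hasDerivAt (l := D) (l' := fderiv ℝ D (0, x)) 0 (hDdiff (0, x)).hasFDerivAt h1
  -- second derivative symmetry
  have hsymm : ∀ (x : E) (v w : ℝ × E),
      fderiv ℝ D (0, x) v w = fderiv ℝ D (0, x) w v := by
    intro x v w
    exact second_derivative_symmetric (fun y => (hGdiff y).hasFDerivAt)
      ((hDdiff (0, x)).hasFDerivAt) v w
  -- key identity from hunit: differentiating D(ε,x)(0, F ε x) = -1 in ε
  have hkey : ∀ x : E,
      fderiv ℝ D (0, x) (1, 0) (0, F 0 x) = - D (0, x) (0, Fε x) := by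
    intro x
    have hc : HasDerivAt (fun ε => D (ε, x)) (fderiv ℝ D (0, x) (1, 0)) 0 := hDε x
    have hu : HasDerivAt (fun ε => ((0 : ℝ), F ε x))
        ((0 : ℝ), Fε x) 0 := (hasDerivAt_const 0 (0 : ℝ)).prodMk (hFε x)
    have happ : HasDerivAt (fun ε => D (ε, x) (0, F ε x))
        (fderiv ℝ D (0, x) (1, 0) (0, F 0 x) + D (0, x) (0, Fε x)) 0 :=
      hc.clm_apply hu
    have hconst : (fun ε => D (ε, x) (0, F ε x)) = fun _ : ℝ => (-1 : ℝ) := by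
      funext ε
      have := hunit ε x
      rw [real_inner_comm] at this
      rw [← stmt12_grad 𝒯 h𝒯 ε x (F ε x), this]
    have h0 : fderiv ℝ D (0, x) (1, 0) (0, F 0 x) + D (0, x) (0, Fε x) = 0 := by
      have := happ.deriv
      rw [hconst, deriv_const] at this
      linarith [this]
    linarith [h0]
  -- derivative of φ
  have hφ' : ∀ t : ℝ, HasDerivAt φ (-(⟪Fε (γ t), gradient (𝒯 0) (γ t)⟫ : ℝ)) t := by
    intro t
    have h1 : HasDerivAt (fun s : ℝ => ((0 : ℝ), γ s)) ((0 : ℝ), F 0 (γ t)) t :=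
      (hasDerivAt_const t (0 : ℝ)).prodMk (hγ t)
    have h2 : HasDerivAt (fun s => D (0, γ s))
        (fderiv ℝ D (0, γ t) (0, F 0 (γ t))) t :=
      HasFDerivAt.comp_hasDerivAt (l := D) t (hDdiff ((fun s : ℝ => ((0 : ℝ), γ s)) t)).hasFDerivAt h1
    have h3 : HasDerivAt φ
        (fderiv ℝ D (0, γ t) (0, F 0 (γ t)) (1, 0) + D (0, γ t) 0) t :=
      h2.clm_apply (hasDerivAt_const t ((1 : ℝ), (0 : E)))
    have h4 : fderiv ℝ D (0, γ t) (0, F 0 (γ t)) (1, 0) + D (0, γ t) 0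
        = -(⟪Fε (γ t), gradient (𝒯 0) (γ t)⟫ : ℝ) := by
      rw [map_zero, add_zero, hsymm (γ t) (0, F 0 (γ t)) (1, 0), hkey (γ t),
        real_inner_comm, stmt12_grad 𝒯 h𝒯 0 (γ t) (Fε (γ t))]
    rwa [h4] at h3
  -- φ(t_out) = 0
  have hφout : φ t_out = 0 := by
    have h1 : (fun ε => 𝒯 ε (γ t_out)) = fun _ : ℝ => (0 : ℝ) := funext hexit
    have h2 := (hεT 0 (γ t_out)).deriv
    rw [h1, deriv_const] at h2
    exact h2.symm
  -- continuity of the integrand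
  have hQcont : Continuous fun t => (⟪Fε (γ t), gradient (𝒯 0) (γ t)⟫ : ℝ) := by
    have hγc : Continuous γ :=
      continuous_iff_continuousAt.2 fun t => (hγ t).continuousAt
    have hFεc : Continuous Fε := by
      have h1 : Continuous (fderiv ℝ (Function.uncurry F)) :=
        hF.continuous_fderiv one_ne_zero
      have h2 : Continuous fun x : E => fderiv ℝ (Function.uncurry F) (0, x) :=
        h1.comp (continuous_const.prodMk continuous_id)
      exact h2.clm_apply continuous_const
    have hgradc : Continuous fun x : E => gradient (𝒯 0) x := by
      have h1 : Continuous D := hDC1.continuous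
      have h2 : Continuous fun x : E => D (0, x) :=
        h1.comp (continuous_const.prodMk continuous_id)
      have h3 : (fun x : E => gradient (𝒯 0) x)
          = fun x => (InnerProductSpace.toDual ℝ E).symm
              ((D (0, x)).comp (stmt12_inr (E := E))) := by
        funext x
        apply (InnerProductSpace.toDual ℝ E).injective
        apply ContinuousLinearMap.ext
        intro v
        rw [LinearIsometryEquiv.apply_symm_apply]
        simp only [InnerProductSpace.toDual_apply_apply]
        rw [stmt12_grad 𝒯 h𝒯 0 x v]
        rfl
      rw [h3]
      exact (InnerProductSpace.toDual ℝ E).symm.continuous.comp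
        (h2.clm_comp continuous_const)
    exact (hFεc.comp hγc).inner (hgradc.comp hγc)
  -- FTC
  have hint : IntervalIntegrable (fun t => (⟪Fε (γ t), gradient (𝒯 0) (γ t)⟫ : ℝ))
      MeasureTheory.volume t_in t_out := hQcont.intervalIntegrable _ _
  have hFTC : (∫ t in t_in..t_out, -(⟪Fε (γ t), gradient (𝒯 0) (γ t)⟫ : ℝ))
      = φ t_out - φ t_in :=
    intervalIntegral.integral_eq_sub_of_hasDerivAt (fun t _ => hφ' t) hint.neg
  have hφin : φ t_in = ∫ t in t_in..t_out, (⟪Fε (γ t), gradient (𝒯 0) (γ t)⟫ : ℝ) := by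
    rw [intervalIntegral.integral_neg, hφout] at hFTC
    linarith [hFTC]
  -- identify the goal integrand with Fε
  have hinteq : (fun t => (⟪deriv (fun ε => F ε (γ t)) 0, gradient (𝒯 0) (γ t)⟫ : ℝ))
      = fun t => (⟪Fε (γ t), gradient (𝒯 0) (γ t)⟫ : ℝ) := by
    funext t
    rw [(hFε (γ t)).deriv]
  -- main chain rule
  have hmain : HasDerivAt (fun ε => 𝒯 ε (x_in ε)) (D (0, x_in 0) (1, deriv x_in 0)) 0 := by
    have h1 : HasDerivAt (fun ε : ℝ => (ε, x_in ε)) ((1 : ℝ), deriv x_in 0) 0 :=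
      (hasDerivAt_id 0).prodMk hx_in.hasDerivAt
    exact ((hGdiff (0, x_in 0)).hasFDerivAt).comp_hasDerivAt 0 h1
  have hsplit : D (0, x_in 0) (1, deriv x_in 0)
      = (⟪gradient (𝒯 0) (γ t_in), deriv x_in 0⟫ : ℝ)
        + ∫ t in t_in..t_out, (⟪deriv (fun ε => F ε (γ t)) 0, gradient (𝒯 0) (γ t)⟫ : ℝ) := by
    have hdecomp : ((1 : ℝ), deriv x_in 0) = ((1 : ℝ), (0 : E)) + ((0 : ℝ), deriv x_in 0) := by
      simp
    rw [hdecomp, map_add, hx_in0, hinteq, ← hφin,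
      stmt12_grad 𝒯 h𝒯 0 (γ t_in) (deriv x_in 0)]
    ring
  rwa [hsplit] at hmain
end

section
/- Let E be a finite-dimensional real inner product space. Let 𝒯 : ℝ × E → ℝ be C² jointly in (ε, x) and F : ℝ × E → E be C¹ jointly, and assume ⟨F(ε, x), ∇_x 𝒯(ε, x)⟩ = −1 for all ε and x, where ∇_x denotes the gradient in the state variable. Let γ : ℝ → E satisfy γ'(t) = F(0, γ(t)) for all t, fix t_in < t_out, and assume 𝒯(ε, γ(t_out)) = 0 for all ε. Then (∂𝒯/∂ε)(0, γ(t_in)) = ∫_{t_in}^{t_out} ⟨∂F/∂ε(0, γ(t)), ∇_x 𝒯(0, γ(t))⟩ dt. -/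
open scoped RealInnerProductSpace

/-- Identity (C.13): 𝒯₁(x_in) = ∫_{t_in}^{t_out} F₁(γ(t)) · η₀(γ(t)) dt, where
F₁ = ∂F_ε/∂ε|₀ and 𝒯₁ = ∂𝒯_ε/∂ε|₀ and η₀ = ∇_x 𝒯(0, ·). -/
theorem stmt13 {E : Type*} [NormedAddCommGroup E] [InnerProductSpace ℝ E]
    [FiniteDimensional ℝ E]
    (𝒯 : ℝ → E → ℝ) (h𝒯 : ContDiff ℝ 2 (Function.uncurry 𝒯))
    (F : ℝ → E → E) (hF : ContDiff ℝ 1 (Function.uncurry F))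
    (hunit : ∀ (ε : ℝ) (x : E), ⟪F ε x, gradient (𝒯 ε) x⟫ = -1)
    (γ : ℝ → E) (hγ : ∀ t, HasDerivAt γ (F 0 (γ t)) t)
    (t_in t_out : ℝ) (hlt : t_in < t_out)
    (hexit : ∀ ε : ℝ, 𝒯 ε (γ t_out) = 0) :
    deriv (fun ε => 𝒯 ε (γ t_in)) 0 =
      ∫ t in t_in..t_out, ⟪deriv (fun ε => F ε (γ t)) 0, gradient (𝒯 0) (γ t)⟫ := by
  set G := Function.uncurry 𝒯 with hGdef
  set H := Function.uncurry F with hHdef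
  have hGd : Differentiable ℝ G := h𝒯.differentiable two_ne_zero
  have hG1 : ContDiff ℝ 1 (fderiv ℝ G) := h𝒯.fderiv_right (le_refl 2)
  have hGd' : Differentiable ℝ (fderiv ℝ G) := hG1.differentiable one_ne_zero
  have hHd : Differentiable ℝ H := hF.differentiable one_ne_zero
  -- derivative of ε ↦ F ε x at 0
  have hFder : ∀ x : E, HasDerivAt (fun ε => F ε x) (fderiv ℝ H (0, x) (1, 0)) 0 := by
    intro x
    exact (hHd (0, x)).hasFDerivAt.comp_hasDerivAt 0
      (HasDerivAt.prodMk (hasDerivAt_id (0 : ℝ)) (hasDerivAt_const 0 x))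
  -- derivative of ε ↦ 𝒯 ε x at 0
  have hTder : ∀ x : E, HasDerivAt (fun ε => 𝒯 ε x) (fderiv ℝ G (0, x) (1, 0)) 0 := by
    intro x
    exact (hGd (0, x)).hasFDerivAt.comp_hasDerivAt 0
      (HasDerivAt.prodMk (hasDerivAt_id (0 : ℝ)) (hasDerivAt_const 0 x))
  -- gradient pairing
  have hgrad : ∀ (ε : ℝ) (x : E) (v : E),
      ⟪v, gradient (𝒯 ε) x⟫ = fderiv ℝ G (ε, x) (0, v) := by
    intro ε x v
    have h1 : HasFDerivAt (fun y : E => ((ε : ℝ), y))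
        (ContinuousLinearMap.inr ℝ ℝ E) x := hasFDerivAt_prodMk_right ε x
    have h2 : HasFDerivAt (𝒯 ε)
        ((fderiv ℝ G (ε, x)).comp (ContinuousLinearMap.inr ℝ ℝ E)) x :=
      (hGd (ε, x)).hasFDerivAt.comp x h1
    rw [real_inner_comm, gradient, InnerProductSpace.toDual_symm_apply, h2.fderiv]
    simp
  -- differentiate the unit relation in ε
  have hpsi : ∀ x : E,
      fderiv ℝ (fderiv ℝ G) (0, x) (1, 0) (0, F 0 x)
        + fderiv ℝ G (0, x) (0, fderiv ℝ H (0, x) (1, 0)) = 0 := by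
    intro x
    have hc : HasDerivAt (fun ε => fderiv ℝ G (ε, x))
        (fderiv ℝ (fderiv ℝ G) (0, x) (1, 0)) 0 :=
      (hGd' (0, x)).hasFDerivAt.comp_hasDerivAt (l := fderiv ℝ G) 0
        (HasDerivAt.prodMk (hasDerivAt_id (0 : ℝ)) (hasDerivAt_const 0 x))
    have hu : HasDerivAt (fun ε => ((0 : ℝ), F ε x))
        ((0 : ℝ), fderiv ℝ H (0, x) (1, 0)) 0 :=
      HasDerivAt.prodMk (hasDerivAt_const 0 (0 : ℝ)) (hFder x)
    have hc2 := hc.clm_apply hu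
    have heq : (fun ε => fderiv ℝ G (ε, x) (0, F ε x)) = fun _ => (-1 : ℝ) := by
      funext ε
      rw [← hgrad ε x (F ε x)]
      exact hunit ε x
    rw [heq] at hc2
    have h0 := hc2.unique (hasDerivAt_const 0 (-1 : ℝ))
    simpa using h0
  -- symmetry of the second derivative
  have hsymm : ∀ (p : ℝ × E) (v w : ℝ × E),
      fderiv ℝ (fderiv ℝ G) p v w = fderiv ℝ (fderiv ℝ G) p w v := by
    intro p v w
    exact second_derivative_symmetric (fun y => (hGd y).hasFDerivAt)
      (hGd' p).hasFDerivAt v w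
  -- u(t) = ∂_ε 𝒯(0, γ t)
  set u : ℝ → ℝ := fun t => fderiv ℝ G (0, γ t) (1, 0) with hudef
  -- c(t) = integrand
  set c : ℝ → ℝ := fun t => fderiv ℝ G (0, γ t) (0, fderiv ℝ H (0, γ t) (1, 0)) with hcdef
  have hu' : ∀ t, HasDerivAt u (-(c t)) t := by
    intro t
    have hcurve : HasDerivAt (fun s => ((0 : ℝ), γ s)) ((0 : ℝ), F 0 (γ t)) t :=
      HasDerivAt.prodMk (hasDerivAt_const t (0 : ℝ)) (hγ t)
    have h1 : HasDerivAt (fun s => fderiv ℝ G (0, γ s))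
        (fderiv ℝ (fderiv ℝ G) (0, γ t) (0, F 0 (γ t))) t :=
      (hGd' (0, γ t)).hasFDerivAt.comp_hasDerivAt (l := fderiv ℝ G) t hcurve
    have h2 := h1.clm_apply (hasDerivAt_const t ((1 : ℝ), (0 : E)))
    have h3 : fderiv ℝ (fderiv ℝ G) (0, γ t) (0, F 0 (γ t)) (1, 0) = -(c t) := by
      rw [hsymm]
      have := hpsi (γ t)
      linarith
    simpa [h3] using h2
  -- continuity of c
  have hγc : Continuous γ := continuous_iff_continuousAt.2 fun t => (hγ t).continuousAt
  have hcurvec : Continuous fun t => ((0 : ℝ), γ t) := continuous_const.prodMk hγc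
  have hcc : Continuous c := by
    have hfG : Continuous (fderiv ℝ G) := hG1.continuous
    have hfH : Continuous (fderiv ℝ H) := hF.continuous_fderiv one_ne_zero
    exact (hfG.comp hcurvec).clm_apply
      (continuous_const.prodMk ((hfH.comp hcurvec).clm_apply continuous_const))
  -- FTC
  have hFTC : (∫ t in t_in..t_out, -(c t)) = u t_out - u t_in := by
    apply intervalIntegral.integral_eq_sub_of_hasDerivAt (fun t _ => hu' t)
    exact (hcc.neg).intervalIntegrable _ _
  -- u t_out = 0
  have huout : u t_out = 0 := by
    have h1 : HasDerivAt (fun ε => 𝒯 ε (γ t_out)) (u t_out) 0 := hTder (γ t_out)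
    have h2 : (fun ε => 𝒯 ε (γ t_out)) = fun _ => (0 : ℝ) := funext hexit
    rw [h2] at h1
    exact h1.unique (hasDerivAt_const 0 (0 : ℝ))
  -- integrand equals c
  have hint : (fun t => ⟪deriv (fun ε => F ε (γ t)) 0, gradient (𝒯 0) (γ t)⟫)
      = c := by
    funext t
    rw [(hFder (γ t)).deriv, hgrad 0 (γ t)]
  rw [hint, (hTder (γ t_in)).deriv]
  have : (∫ t in t_in..t_out, -(c t)) = -∫ t in t_in..t_out, c t :=
    intervalIntegral.integral_neg
  rw [this, huout] at hFTC
  linarith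
end

section
/- Let α > 0 and let x, y : ℝ → ℝ be differentiable functions satisfying x'(t) = α x(t) − y(t) and y'(t) = x(t) + α y(t) for all t ≥ 0 (the interior vector field of the planar model). Assume (x(0), y(0)) ≠ (0, 0) and x(0)² + y(0)² ≤ 2. Then there exists t ∈ [0, (1/(2α)) · log(2/(x(0)² + y(0)²))] such that max(|x(t)|, |y(t)|) ≥ 1; i.e., the trajectory reaches the boundary of the square [−1, 1] × [−1, 1] within that time. -/
/-- Every nonzero trajectory of the spiral source dx/dt = αx − y, dy/dt = x + αy starting
in the disk x₀² + y₀² ≤ 2 reaches the boundary of the square [−1,1]² within time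
(1/(2α)) log(2/(x₀² + y₀²)). -/
theorem stmt16 (α : ℝ) (hα : 0 < α) (x y : ℝ → ℝ)
    (hx : ∀ t : ℝ, 0 ≤ t → HasDerivAt x (α * x t - y t) t)
    (hy : ∀ t : ℝ, 0 ≤ t → HasDerivAt y (x t + α * y t) t)
    (h0 : (x 0, y 0) ≠ (0, 0))
    (hdisk : x 0 ^ 2 + y 0 ^ 2 ≤ 2) :
    ∃ t ∈ Set.Icc (0 : ℝ) ((1 / (2 * α)) * Real.log (2 / (x 0 ^ 2 + y 0 ^ 2))),
      1 ≤ max |x t| |y t| := by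
  set r : ℝ → ℝ := fun t => x t ^ 2 + y t ^ 2 with hrdef
  have hr0pos : 0 < r 0 := by
    have hne : x 0 ≠ 0 ∨ y 0 ≠ 0 := by
      by_contra h
      push_neg at h
      exact h0 (by simp [h.1, h.2])
    rcases hne with h | h
    · have := sq_pos_of_ne_zero h
      have := sq_nonneg (y 0)
      simp only [hrdef]
      nlinarith
    · have := sq_pos_of_ne_zero h
      have := sq_nonneg (x 0)
      simp only [hrdef]
      nlinarith
  have hr : ∀ t : ℝ, 0 ≤ t → HasDerivAt r (2 * α * r t) t := by
    intro t ht
    have h := ((hx t ht).pow 2).add ((hy t ht).pow 2)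
    refine h.congr_deriv ?_
    simp only [hrdef]
    push_cast
    ring
  set T : ℝ := (1 / (2 * α)) * Real.log (2 / (x 0 ^ 2 + y 0 ^ 2)) with hTdef
  have hT0 : 0 ≤ T := by
    apply mul_nonneg
    · positivity
    · apply Real.log_nonneg
      rw [le_div_iff₀ hr0pos]
      simpa using hdisk
  set f : ℝ → ℝ := fun t => r t * Real.exp (-(2 * α) * t) with hfdef
  have hf : ∀ t : ℝ, 0 ≤ t → HasDerivAt f 0 t := by
    intro t ht
    have hexp : HasDerivAt (fun t : ℝ => Real.exp (-(2 * α) * t))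
        (Real.exp (-(2 * α) * t) * (-(2 * α))) t := by
      have h1 : HasDerivAt (fun t : ℝ => -(2 * α) * t) (-(2 * α)) t := by
        simpa using (hasDerivAt_id t).const_mul (-(2 * α))
      exact h1.exp
    have h := (hr t ht).mul hexp
    refine h.congr_deriv ?_
    ring
  have hfconst : f T = f 0 := by
    have hcont : ContinuousOn f (Set.Icc 0 T) := fun t ht =>
      (hf t ht.1).continuousAt.continuousWithinAt
    have hderiv : ∀ t ∈ Set.Ico (0:ℝ) T, HasDerivWithinAt f 0 (Set.Ici t) t := fun t ht =>
      (hf t ht.1).hasDerivWithinAt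
    exact constant_of_has_deriv_right_zero hcont hderiv T ⟨hT0, le_refl T⟩
  have hexpT : Real.exp (-(2 * α) * T) = r 0 / 2 := by
    have h1 : -(2 * α) * T = -Real.log (2 / r 0) := by
      simp only [hTdef, hrdef]
      field_simp
    rw [h1, Real.exp_neg, Real.exp_log (by positivity)]
    field_simp
  have hrT : r T = 2 := by
    have h0' : f 0 = r 0 := by simp [hfdef]
    have hT' : f T = r T * (r 0 / 2) := by rw [hfdef]; simp only; rw [hexpT]
    rw [h0', hT'] at hfconst
    field_simp at hfconst
    nlinarith [hr0pos]
  refine ⟨T, ⟨hT0, le_refl T⟩, ?_⟩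
  by_contra h
  push_neg at h
  have hx1 : |x T| < 1 := lt_of_le_of_lt (le_max_left _ _) h
  have hy1 : |y T| < 1 := lt_of_le_of_lt (le_max_right _ _) h
  have hx2 : x T ^ 2 < 1 := by
    have := abs_nonneg (x T)
    nlinarith [sq_abs (x T)]
  have hy2 : y T ^ 2 < 1 := by
    have := abs_nonneg (y T)
    nlinarith [sq_abs (y T)]
  have : r T < 2 := by simp only [hrdef]; linarith
  linarith [this, hrT.ge]
end
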